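/- arXiv:2603.09795 — 5 statements merged into one kernel-verified Lean document; each statement's English description precedes it below -/
import Mathlib

section
/- If a graph G contains an M-flower relative to some maximum matching M, then G is not a König–Egerváry graph. -/
open SimpleGraph

variable {V : Type*} [DecidableEq V]

/-- `M` is a matching of `G`: a set of edges of `G`, pairwise not sharing a vertex. -/
def IsMatching' (G : SimpleGraph V) (M : Finset (Sym2 V)) : Prop :=
  (↑M : Set (Sym2 V)) ⊆ G.edgeSet ∧
    ∀ e ∈ M, ∀ f ∈ M, e ≠ f → ∀ v : V, ¬(v ∈ e ∧ v ∈ f)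

/-- `M` is a maximum matching of `G`. -/
def IsMaxMatching (G : SimpleGraph V) (M : Finset (Sym2 V)) : Prop :=
  IsMatching' G M ∧ ∀ M' : Finset (Sym2 V), IsMatching' G M' → M'.card ≤ M.card

/-- The vertex `v` is matched (saturated) by `M`. -/
def MatchedBy (M : Finset (Sym2 V)) (v : V) : Prop :=
  ∃ e ∈ M, v ∈ e

/-- A walk is `M`-alternating: consecutive edges alternate between `M` and its complement. -/
def IsAltWalk {G : SimpleGraph V} (M : Finset (Sym2 V)) {u v : V} (w : G.Walk u v) : Prop :=
  w.edges.Chain' (fun e f => e ∈ M ↔ f ∉ M)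

/-- The first edge of the walk belongs to `M`. -/
def StartsMatched {G : SimpleGraph V} (M : Finset (Sym2 V)) {u v : V} (w : G.Walk u v) : Prop :=
  ∃ e, w.edges.head? = some e ∧ e ∈ M

/-- The last edge of the walk belongs to `M`. -/
def EndsMatched {G : SimpleGraph V} (M : Finset (Sym2 V)) {u v : V} (w : G.Walk u v) : Prop :=
  ∃ e, w.edges.getLast? = some e ∧ e ∈ M

/-- The first edge of the walk does not belong to `M`. -/
def StartsUnmatched {G : SimpleGraph V} (M : Finset (Sym2 V)) {u v : V} (w : G.Walk u v) : Prop :=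
  ∃ e, w.edges.head? = some e ∧ e ∉ M

/-- The last edge of the walk does not belong to `M`. -/
def EndsUnmatched {G : SimpleGraph V} (M : Finset (Sym2 V)) {u v : V} (w : G.Walk u v) : Prop :=
  ∃ e, w.edges.getLast? = some e ∧ e ∉ M

/-- An `M`-blossom with base `b`: an odd cycle of length `2k+1` containing exactly `k`
edges of `M`, alternating, whose base `b` is not matched within the cycle. -/
def IsBlossom (G : SimpleGraph V) (M : Finset (Sym2 V)) {b : V} (c : G.Walk b b) : Prop :=
  c.IsCycle ∧ Odd c.length ∧ IsAltWalk M c ∧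
    2 * (c.edges.toFinset ∩ M).card + 1 = c.length ∧
    ∀ e ∈ c.edges, e ∈ M → b ∉ e

/-- An `M`-flower: an `M`-blossom with base `b` together with an even `M`-alternating
stem from `b` to an `M`-unmatched vertex `u`, sharing only the base with the blossom. -/
def IsFlower (G : SimpleGraph V) (M : Finset (Sym2 V)) {b u : V}
    (c : G.Walk b b) (s : G.Walk b u) : Prop :=
  IsBlossom G M c ∧ s.IsPath ∧ Even s.length ∧ IsAltWalk M s ∧
    ¬ MatchedBy M u ∧ ∀ x ∈ s.support, x ∈ c.support → x = b

/-- An `M`-posy: two distinct `M`-blossoms joined by an odd `M`-alternating path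
between their bases, starting and ending with matched edges. -/
def IsPosy (G : SimpleGraph V) (M : Finset (Sym2 V)) {b₁ b₂ : V}
    (c₁ : G.Walk b₁ b₁) (c₂ : G.Walk b₂ b₂) (p : G.Walk b₁ b₂) : Prop :=
  IsBlossom G M c₁ ∧ IsBlossom G M c₂ ∧ (b₁ ≠ b₂ ∨ c₁.edges ≠ c₂.edges) ∧
    p.IsPath ∧ Odd p.length ∧ IsAltWalk M p ∧ StartsMatched M p ∧ EndsMatched M p

/-- An `M`-Tposy: a posy whose connecting path is internally disjoint from both blossoms. -/
def IsTposy (G : SimpleGraph V) (M : Finset (Sym2 V)) {b₁ b₂ : V}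
    (c₁ : G.Walk b₁ b₁) (c₂ : G.Walk b₂ b₂) (p : G.Walk b₁ b₂) : Prop :=
  IsPosy G M c₁ c₂ p ∧
    ∀ x ∈ p.support, x ≠ b₁ → x ≠ b₂ → x ∉ c₁.support ∧ x ∉ c₂.support

/-- An `M`-Jposy: two (not necessarily distinct) `M`-blossoms joined by an odd
`M`-alternating walk between their bases, starting and ending with matched edges. -/
def IsJposy (G : SimpleGraph V) (M : Finset (Sym2 V)) {b₁ b₂ : V}
    (c₁ : G.Walk b₁ b₁) (c₂ : G.Walk b₂ b₂) (w : G.Walk b₁ b₂) : Prop :=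
  IsBlossom G M c₁ ∧ IsBlossom G M c₂ ∧
    Odd w.length ∧ IsAltWalk M w ∧ StartsMatched M w ∧ EndsMatched M w

/-- An `M`-Jflower: an `M`-blossom together with an `M`-alternating walk from its base
to an `M`-unmatched vertex. -/
def IsJflower (G : SimpleGraph V) (M : Finset (Sym2 V)) {b u : V}
    (c : G.Walk b b) (w : G.Walk b u) : Prop :=
  IsBlossom G M c ∧ IsAltWalk M w ∧ ¬ MatchedBy M u

/-- The vertex `x` belongs to some `M`-flower. -/
def InFlower (G : SimpleGraph V) (M : Finset (Sym2 V)) (x : V) : Prop :=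
  ∃ (b u : V) (c : G.Walk b b) (s : G.Walk b u),
    IsFlower G M c s ∧ (x ∈ c.support ∨ x ∈ s.support)

/-- The vertex `x` belongs to some `M`-posy. -/
def InPosy (G : SimpleGraph V) (M : Finset (Sym2 V)) (x : V) : Prop :=
  ∃ (b₁ b₂ : V) (c₁ : G.Walk b₁ b₁) (c₂ : G.Walk b₂ b₂) (p : G.Walk b₁ b₂),
    IsPosy G M c₁ c₂ p ∧ (x ∈ c₁.support ∨ x ∈ c₂.support ∨ x ∈ p.support)

/-- The vertex `x` belongs to some `M`-Tposy. -/
def InTposy (G : SimpleGraph V) (M : Finset (Sym2 V)) (x : V) : Prop :=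
  ∃ (b₁ b₂ : V) (c₁ : G.Walk b₁ b₁) (c₂ : G.Walk b₂ b₂) (p : G.Walk b₁ b₂),
    IsTposy G M c₁ c₂ p ∧ (x ∈ c₁.support ∨ x ∈ c₂.support ∨ x ∈ p.support)

/-- The vertex `x` belongs to some `M`-Jposy. -/
def InJposy (G : SimpleGraph V) (M : Finset (Sym2 V)) (x : V) : Prop :=
  ∃ (b₁ b₂ : V) (c₁ : G.Walk b₁ b₁) (c₂ : G.Walk b₂ b₂) (w : G.Walk b₁ b₂),
    IsJposy G M c₁ c₂ w ∧ (x ∈ c₁.support ∨ x ∈ c₂.support ∨ x ∈ w.support)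

/-- The vertex `x` belongs to some `M`-Jflower. -/
def InJflower (G : SimpleGraph V) (M : Finset (Sym2 V)) (x : V) : Prop :=
  ∃ (b u : V) (c : G.Walk b b) (w : G.Walk b u),
    IsJflower G M c w ∧ (x ∈ c.support ∨ x ∈ w.support)

/-- The independence number of `G`. -/
noncomputable def indepNum (G : SimpleGraph V) : ℕ :=
  sSup {n | ∃ s : Finset V, (∀ u ∈ s, ∀ w ∈ s, ¬ G.Adj u w) ∧ s.card = n}

/-- The matching number of `G`. -/
noncomputable def matchNum (G : SimpleGraph V) : ℕ :=
  sSup {n | ∃ M : Finset (Sym2 V), IsMatching' G M ∧ M.card = n}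

/-- `G` is a König–Egerváry graph: `α(G) + μ(G) = |V(G)|`. -/
def IsKE (G : SimpleGraph V) [Fintype V] : Prop :=
  _root_.indepNum G + matchNum G = Fintype.card V

section Aux

lemma head_edge_mem_start {G : SimpleGraph V} {a x : V} (w : G.Walk a x)
    {e : Sym2 V} (h : w.edges.head? = some e) : a ∈ e := by
  cases w with
  | nil => simp [SimpleGraph.Walk.edges] at h
  | cons h' w' =>
    rw [SimpleGraph.Walk.edges_cons] at h
    simp only [List.head?_cons, Option.some.injEq] at h
    subst h
    exact Sym2.mem_mk_left _ _

lemma lemA {G : SimpleGraph V} (M : Finset (Sym2 V)) (C : Finset V)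
    (hcov : ∀ ⦃x y : V⦄, G.Adj x y → x ∈ C ∨ y ∈ C)
    (hone : ∀ e ∈ M, ∀ x y : V, x ∈ e → y ∈ e → x ∈ C → y ∈ C → x = y)
    {a z : V} (w : G.Walk a z) :
    ∀ st : Bool, IsAltWalk M w →
      (st = false → a ∉ C ∧ ∀ e, w.edges.head? = some e → e ∉ M) →
      (st = true → a ∈ C ∧ ∀ e, w.edges.head? = some e → e ∈ M) →
      (z ∈ C ↔ (st = true ↔ Even w.length)) := by
  induction w with
  | nil =>
    intro st _ h0 h1
    simp only [SimpleGraph.Walk.length_nil, Even.zero, iff_true]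
    cases st with
    | false => simpa using (h0 rfl).1
    | true => simpa using (h1 rfl).1
  | @cons u v y hadj w ih =>
    intro st halt h0 h1
    have halt' : (∀ e ∈ w.edges.head?, (s(u, v) ∈ M ↔ e ∉ M)) ∧ IsAltWalk M w := by
      have := halt
      rw [IsAltWalk, SimpleGraph.Walk.edges_cons, List.Chain', List.isChain_cons] at this
      exact this
    cases st with
    | false =>
      have ha := (h0 rfl).1
      have hfirst : s(u, v) ∉ M := (h0 rfl).2 _ (by simp)
      have hb : v ∈ C := (hcov hadj).resolve_left ha
      have key := ih true halt'.2
        (by simp)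
        (fun _ => ⟨hb, fun e he => by
          have := halt'.1 e he
          tauto⟩)
      rw [key]
      simp [SimpleGraph.Walk.length_cons, Nat.even_add_one]
    | true =>
      have ha := (h1 rfl).1
      have hfirst : s(u, v) ∈ M := (h1 rfl).2 _ (by simp)
      have hb : v ∉ C := by
        intro hv
        exact hadj.ne (hone _ hfirst u v (Sym2.mem_mk_left _ _) (Sym2.mem_mk_right _ _) ha hv)
      have key := ih false halt'.2
        (fun _ => ⟨hb, fun e he => by
          have := halt'.1 e he
          tauto⟩)
        (by simp)
      rw [key]
      simp [SimpleGraph.Walk.length_cons, Nat.even_add_one]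

end Aux

/-- If `G` contains an `M`-flower relative to some maximum matching `M`,
then `G` is not a König–Egerváry graph. -/
theorem stmt_1 {V : Type*} [DecidableEq V] [Fintype V] (G : SimpleGraph V)
    (M : Finset (Sym2 V)) (hM : IsMaxMatching G M)
    (h : ∃ (b u : V) (c : G.Walk b b) (s : G.Walk b u), IsFlower G M c s) :
    ¬ IsKE G := by
  classical
  intro hKE
  obtain ⟨b, u, c, s, hF⟩ := h
  obtain ⟨⟨hcyc, hodd, hcalt, hcount, hbase⟩, hspath, hseven, hsalt, hsu, hdisj⟩ := hF
  -- matchNum G = M.card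
  have hmn : matchNum G = M.card := by
    apply IsGreatest.csSup_eq
    constructor
    · exact ⟨M, hM.1, rfl⟩
    · rintro n ⟨M', hM', rfl⟩
      exact hM.2 M' hM'
  -- a maximum independent set
  have hA : _root_.indepNum G ∈ {n | ∃ s : Finset V, (∀ u ∈ s, ∀ w ∈ s, ¬ G.Adj u w) ∧ s.card = n} := by
    apply Nat.sSup_mem
    · exact ⟨0, ∅, by simp, by simp⟩
    · exact ⟨Fintype.card V, by rintro n ⟨s, _, rfl⟩; exact Finset.card_le_univ s⟩
  obtain ⟨S, hSind, hScard⟩ := hA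
  have hKE' : _root_.indepNum G + matchNum G = Fintype.card V := hKE
  have hSM : S.card + M.card = Fintype.card V := by rw [hScard, ← hmn]; exact hKE'
  have hCcard : Sᶜ.card = M.card := by
    rw [Finset.card_compl]
    omega
  -- Sᶜ is a vertex cover
  have hcov : ∀ ⦃x y : V⦄, G.Adj x y → x ∈ Sᶜ ∨ y ∈ Sᶜ := by
    intro x y hxy
    by_contra hc
    push_neg at hc
    simp only [Finset.mem_compl, not_not] at hc
    exact hSind x hc.1 y hc.2 hxy
  -- choose a covered endpoint of each matching edge
  set f : Sym2 V → V := fun e => if h : ∃ v, v ∈ Sᶜ ∧ v ∈ e then h.choose else b with hfdef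
  have hf : ∀ e ∈ M, f e ∈ Sᶜ ∧ f e ∈ e := by
    intro e he
    have hedge : e ∈ G.edgeSet := hM.1.1 (Finset.mem_coe.mpr he)
    have hex : ∃ v, v ∈ Sᶜ ∧ v ∈ e := by
      clear he
      revert hedge
      induction e using Sym2.ind with
      | _ x y =>
        intro hxy
        rcases hcov (G.mem_edgeSet.mp hxy) with h' | h'
        · exact ⟨x, h', Sym2.mem_mk_left _ _⟩
        · exact ⟨y, h', Sym2.mem_mk_right _ _⟩
    rw [hfdef]
    simp only [dif_pos hex]
    exact hex.choose_spec
  have hinj : Set.InjOn f ↑M := by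
    intro e he e' he' hfe
    by_contra hne
    refine hM.1.2 e (Finset.mem_coe.mp he) e' (Finset.mem_coe.mp he') hne (f e) ?_
    exact ⟨(hf e (Finset.mem_coe.mp he)).2, hfe ▸ (hf e' (Finset.mem_coe.mp he')).2⟩
  have himg : M.image f = Sᶜ := by
    apply Finset.eq_of_subset_of_card_le
    · intro v hv
      obtain ⟨e, he, rfl⟩ := Finset.mem_image.mp hv
      exact (hf e he).1
    · rw [Finset.card_image_of_injOn hinj, hCcard]
  -- every vertex of Sᶜ is matched
  have hmatched : ∀ v ∈ Sᶜ, ∃ e ∈ M, v ∈ e := by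
    intro v hv
    rw [← himg] at hv
    obtain ⟨e, he, rfl⟩ := Finset.mem_image.mp hv
    exact ⟨e, he, (hf e he).2⟩
  -- each matching edge has exactly one endpoint in Sᶜ
  have hone : ∀ e ∈ M, ∀ x y : V, x ∈ e → y ∈ e → x ∈ Sᶜ → y ∈ Sᶜ → x = y := by
    intro e he x y hxe hye hxC hyC
    have key : ∀ z : V, z ∈ e → z ∈ Sᶜ → z = f e := by
      intro z hze hzC
      rw [← himg] at hzC
      obtain ⟨e₁, he₁, hfe₁⟩ := Finset.mem_image.mp hzC
      have hz1 : z ∈ e₁ := hfe₁ ▸ (hf e₁ he₁).2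
      have : e₁ = e := by
        by_contra hne
        exact hM.1.2 e₁ he₁ e he hne z ⟨hz1, hze⟩
      rw [← hfe₁, this]
    rw [key x hxe hxC, key y hye hyC]
  -- u is unmatched hence not in Sᶜ
  have hu : u ∉ Sᶜ := by
    intro hu'
    exact hsu (hmatched u hu')
  -- the reversed stem alternates
  have hsaltrev : IsAltWalk M s.reverse := by
    rw [IsAltWalk, SimpleGraph.Walk.edges_reverse, List.Chain', List.isChain_reverse]
    exact List.IsChain.imp (fun a b h => show b ∈ M ↔ a ∉ M by tauto) hsalt
  -- head of reversed stem is unmatched (it contains u)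
  have hlast : ∀ e, s.reverse.edges.head? = some e → e ∉ M := by
    intro e he hem
    exact hsu ⟨e, hem, head_edge_mem_start s.reverse he⟩
  have hb1 := lemA M Sᶜ hcov hone s.reverse false hsaltrev
    (fun _ => ⟨hu, hlast⟩) (by simp)
  rw [SimpleGraph.Walk.length_reverse] at hb1
  have hbnot : b ∉ Sᶜ := by
    rw [hb1]
    simp [hseven]
  -- now the blossom
  have hhead : ∀ e, c.edges.head? = some e → e ∉ M := by
    intro e he hem
    exact hbase e (List.mem_of_mem_head? he) hem (head_edge_mem_start c he)
  have hb2 := lemA M Sᶜ hcov hone c false hcalt (fun _ => ⟨hbnot, hhead⟩) (by simp)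
  apply hbnot
  rw [hb2]
  simp [Nat.not_even_iff_odd.mpr hodd]
end

section
/- If a graph G contains an M-posy relative to some maximum matching M, then G is not a König–Egerváry graph. -/
open SimpleGraph

variable {V : Type*} [DecidableEq V]

lemma head?_mem_of_walk {V : Type*} {G : SimpleGraph V} {u v : V} (w : G.Walk u v)
    (e : Sym2 V) (he : w.edges.head? = some e) : u ∈ e := by
  cases w with
  | nil => simp at he
  | cons h q =>
    rw [Walk.edges_cons] at he
    simp only [List.head?_cons, Option.some.injEq] at he
    subst he
    exact Sym2.mem_mk_left _ _

lemma getLast?_mem_of_walk {V : Type*} {G : SimpleGraph V} {u v : V} (w : G.Walk u v)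
    (e : Sym2 V) (he : w.edges.getLast? = some e) : v ∈ e := by
  have h2 : w.reverse.edges.head? = some e := by
    rw [Walk.edges_reverse, List.head?_reverse]; exact he
  exact head?_mem_of_walk w.reverse e h2

lemma walkprop {V : Type*} {G : SimpleGraph V} (M : Finset (Sym2 V)) (C : Set V)
    (hcov : ∀ x y : V, G.Adj x y → x ∈ C ∨ y ∈ C)
    (hone : ∀ e ∈ M, ∀ x y : V, s(x, y) = e → x ∈ C → y ∈ C → False) :
    ∀ {u v : V} (w : G.Walk u v) (e f : Sym2 V), IsAltWalk M w →
      w.edges.head? = some e → w.edges.getLast? = some f →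
      (u ∈ C ↔ e ∈ M) → (v ∈ C ↔ f ∉ M) := by
  intro u v w
  induction w with
  | nil => intro e f _ he _ _; simp at he
  | @cons a b c h q ih =>
    intro e f halt he hf hu
    rw [Walk.edges_cons] at he hf
    simp only [List.head?_cons, Option.some.injEq] at he
    subst he
    cases hqE : q.edges with
    | nil =>
      have hbc : b = c := q.eq_of_length_eq_zero (by
        rw [← Walk.length_edges, hqE]; rfl)
      subst hbc
      rw [hqE, List.getLast?_singleton, Option.some.injEq] at hf
      subst hf
      by_cases hfM : s(a, b) ∈ M
      · have haC : a ∈ C := hu.mpr hfM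
        simp only [hfM, not_true_eq_false, iff_false]
        intro hbC
        exact hone _ hfM a b rfl haC hbC
      · have haC : a ∉ C := fun hx => hfM (hu.mp hx)
        simp only [hfM, not_false_eq_true, iff_true]
        rcases hcov a b h with h1 | h2
        · exact absurd h1 haC
        · exact h2
    | cons e' rest =>
      unfold IsAltWalk at halt
      rw [Walk.edges_cons, hqE] at halt
      simp only [List.Chain', List.isChain_cons_cons] at halt
      obtain ⟨hrel, htail⟩ := halt
      have htail' : IsAltWalk M q := by unfold IsAltWalk; rw [hqE]; exact htail
      have hhead' : q.edges.head? = some e' := by rw [hqE]; rfl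
      have hlast' : q.edges.getLast? = some f := by
        rw [hqE] at hf ⊢
        rwa [List.getLast?_cons_cons] at hf
      have hu' : b ∈ C ↔ e' ∈ M := by
        by_cases heM : s(a, b) ∈ M
        · have haC : a ∈ C := hu.mpr heM
          have hbC : b ∉ C := fun hb => hone _ heM a b rfl haC hb
          have he'M : e' ∉ M := hrel.mp heM
          simp [hbC, he'M]
        · have haC : a ∉ C := fun hx => heM (hu.mp hx)
          have hbC : b ∈ C := by
            rcases hcov a b h with h1 | h2
            · exact absurd h1 haC
            · exact h2
          have he'M : e' ∈ M := by
            by_contra hn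
            exact heM (hrel.mpr hn)
          simp [hbC, he'M]
      exact ih e' f htail' hhead' hlast' hu'



open Classical in
noncomputable def pickC {V : Type*} (C : Finset V) (d : V) (e : Sym2 V) : V :=
  if h : ∃ x, x ∈ e ∧ x ∈ C then h.choose else d

lemma pickC_spec {V : Type*} {C : Finset V} {d : V} {e : Sym2 V}
    (h : ∃ x, x ∈ e ∧ x ∈ C) : pickC C d e ∈ e ∧ pickC C d e ∈ C := by
  rw [pickC, dif_pos h]
  exact ⟨h.choose_spec.1, h.choose_spec.2⟩


/-- If `G` contains an `M`-posy relative to some maximum matching `M`,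
then `G` is not a König–Egerváry graph. -/
theorem stmt_2 {V : Type*} [DecidableEq V] [Fintype V] (G : SimpleGraph V)
    (M : Finset (Sym2 V)) (hM : IsMaxMatching G M)
    (h : ∃ (b₁ b₂ : V) (c₁ : G.Walk b₁ b₁) (c₂ : G.Walk b₂ b₂) (p : G.Walk b₁ b₂),
      IsPosy G M c₁ c₂ p) :
    ¬ IsKE G := by
  intro hKE
  classical
  obtain ⟨b₁, b₂, c₁, c₂, p, hposy⟩ := h
  obtain ⟨hB₁, hB₂, -, -, -, haltp, hsm, hem⟩ := hposy
  have hmem : M.card ∈ {n | ∃ M' : Finset (Sym2 V), IsMatching' G M' ∧ M'.card = n} :=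
    ⟨M, hM.1, rfl⟩
  have hub : ∀ n ∈ {n | ∃ M' : Finset (Sym2 V), IsMatching' G M' ∧ M'.card = n}, n ≤ M.card := by
    rintro n ⟨M', hM', rfl⟩
    exact hM.2 M' hM'
  have hmn : matchNum G = M.card := by
    unfold matchNum
    exact le_antisymm (csSup_le ⟨_, hmem⟩ hub) (le_csSup ⟨M.card, hub⟩ hmem)
  have hα : _root_.indepNum G ∈ {n | ∃ s : Finset V, (∀ u ∈ s, ∀ w ∈ s, ¬ G.Adj u w) ∧ s.card = n} := by
    unfold _root_.indepNum
    exact Nat.sSup_mem ⟨0, ∅, by simp, by simp⟩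
      ⟨Fintype.card V, by rintro n ⟨s, -, rfl⟩; simpa using Finset.card_le_univ s⟩
  obtain ⟨s, hindep, hscard⟩ := hα
  set C : Finset V := sᶜ with hCdef
  have hCcard : C.card = M.card := by
    have h1 : C.card = Fintype.card V - s.card := Finset.card_compl s
    have h2 : s.card ≤ Fintype.card V := Finset.card_le_univ s |>.trans (by simp)
    have hKE' : _root_.indepNum G + matchNum G = Fintype.card V := hKE
    omega
  have hcov : ∀ x y : V, G.Adj x y → x ∈ (↑C : Set V) ∨ y ∈ (↑C : Set V) := by
    intro x y hadj
    by_contra hc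
    push_neg at hc
    have hx : x ∈ s := by
      have := hc.1; simp only [Finset.mem_coe, hCdef, Finset.mem_compl] at this
      exact not_not.mp this
    have hy : y ∈ s := by
      have := hc.2; simp only [Finset.mem_coe, hCdef, Finset.mem_compl] at this
      exact not_not.mp this
    exact hindep x hx y hy hadj
  have hedge : ∀ e ∈ M, e ∈ G.edgeSet := fun e he => hM.1.1 he
  have hex : ∀ e ∈ M, ∃ x, x ∈ e ∧ x ∈ C := by
    intro e he
    have hE := hedge e he
    revert hE
    induction e using Sym2.ind with
    | _ x y =>
      intro hE
      rw [SimpleGraph.mem_edgeSet] at hE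
      rcases hcov x y hE with h1 | h1
      · exact ⟨x, Sym2.mem_mk_left _ _, h1⟩
      · exact ⟨y, Sym2.mem_mk_right _ _, h1⟩
  set F : Sym2 V → V := pickC C b₁ with hFdef
  have hF : ∀ e ∈ M, F e ∈ e ∧ F e ∈ C := fun e he => pickC_spec (hex e he)
  have hinj : Set.InjOn F M := by
    intro e he e' he' heq
    by_contra hne
    exact hM.1.2 e he e' he' hne (F e) ⟨(hF e he).1, heq ▸ (hF e' he').1⟩
  have himg : M.image F = C := by
    apply Finset.eq_of_subset_of_card_le
    · intro x hx
      obtain ⟨e, he, rfl⟩ := Finset.mem_image.mp hx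
      exact (hF e he).2
    · rw [Finset.card_image_of_injOn hinj, hCcard]
  have hone : ∀ e ∈ M, ∀ x y : V, s(x, y) = e → x ∈ (↑C : Set V) → y ∈ (↑C : Set V) → False := by
    intro e he x y hxy hx hy
    subst hxy
    have hx' : x ∈ C := hx
    have hy' : y ∈ C := hy
    have hxy' : x ≠ y := by
      rintro rfl
      have hE := hedge _ he
      rw [SimpleGraph.mem_edgeSet] at hE
      exact G.loopless.irrefl _ hE
    have hFe : F s(x, y) = x ∨ F s(x, y) = y := by
      have hm := (hF _ he).1
      rwa [Sym2.mem_iff] at hm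
    obtain ⟨z, hzC, hzmem, hzne⟩ : ∃ z, z ∈ C ∧ z ∈ s(x, y) ∧ z ≠ F s(x, y) := by
      rcases hFe with h1 | h1
      · exact ⟨y, hy', Sym2.mem_mk_right _ _, by rw [h1]; exact hxy'.symm⟩
      · exact ⟨x, hx', Sym2.mem_mk_left _ _, by rw [h1]; exact hxy'⟩
    have hz2 : z ∈ M.image F := himg ▸ hzC
    obtain ⟨e', he', hFe'⟩ := Finset.mem_image.mp hz2
    have hne : e' ≠ s(x, y) := by rintro rfl; exact hzne hFe'.symm
    exact hM.1.2 e' he' _ he hne z ⟨hFe' ▸ (hF e' he').1, hzmem⟩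
  have hbase : ∀ {b : V} (c : G.Walk b b), IsBlossom G M c → b ∈ (↑C : Set V) := by
    intro b c hB
    obtain ⟨hcyc, hodd, halt, -, hbm⟩ := hB
    have hne : c.edges ≠ [] := by
      intro h0
      have hl : c.length = 0 := by rw [← Walk.length_edges, h0]; rfl
      rw [hl] at hodd
      simp [Nat.odd_iff] at hodd
    have hhe : c.edges.head? = some (c.edges.head hne) := List.head?_eq_head hne
    have hhf : c.edges.getLast? = some (c.edges.getLast hne) := List.getLast?_eq_getLast hne
    have heM : c.edges.head hne ∉ M := fun hmem =>
      hbm _ (List.head_mem hne) hmem (head?_mem_of_walk c _ hhe)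
    have hfM : c.edges.getLast hne ∉ M := fun hmem =>
      hbm _ (List.getLast_mem hne) hmem (getLast?_mem_of_walk c _ hhf)
    by_contra hbC
    exact hbC ((walkprop M (↑C) hcov hone c _ _ halt hhe hhf (iff_of_false hbC heM)).mpr hfM)
  have hb1 : b₁ ∈ (↑C : Set V) := hbase c₁ hB₁
  have hb2 : b₂ ∈ (↑C : Set V) := hbase c₂ hB₂
  obtain ⟨e, hpe, heM⟩ := hsm
  obtain ⟨f, hpf, hfM⟩ := hem
  exact (walkprop M (↑C) hcov hone p e f haltp hpe hpf (iff_of_true hb1 heM)).mp hb2 hfM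
end

section
/- Let G be a graph, M a matching, and W an M-alternating walk from u to v that starts and ends with edges not in M. Then either there exists an M-alternating path from u to v starting and ending with edges not in M, or there exists an M-alternating walk from u to v (starting and ending with unmatched edges) whose first self-intersection forms an M-blossom. -/
open SimpleGraph

variable {V : Type*} [DecidableEq V]

set_option linter.unusedSectionVars false
set_option maxHeartbeats 1000000

lemma prefix_nodup_of_first_occ {α : Type*} [DecidableEq α] {P S L Mx : List α} {u : α}
    (h : P ++ S = L ++ Mx) (hL : L.Nodup) (huL : u ∈ L)
    (hcount : P.count u = 1) (hlast : P.getLast? = some u) : P.Nodup := by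
  have hPne : P ≠ [] := by rintro rfl; simp at hlast
  have hPd : P.dropLast ++ [u] = P := List.dropLast_append_getLast? u hlast
  have hnotin : u ∉ P.dropLast := by
    intro hmem
    have h1 : 1 ≤ P.dropLast.count u := List.count_pos_iff.2 hmem
    have h2 := congrArg (List.count u) hPd
    rw [List.count_append] at h2
    simp at h2
    omega
  rcases le_or_gt P.length L.length with hle | hlt
  · have hPL : P = L.take P.length := by
      have h2 := congrArg (List.take P.length) h
      rwa [List.take_left, List.take_append_of_le_length hle] at h2
    rw [hPL]
    exact hL.sublist (List.take_sublist _ _)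
  · exfalso
    have hLP : L = P.take L.length := by
      have h2 := congrArg (List.take L.length) h
      rw [List.take_left, List.take_append_of_le_length hlt.le] at h2
      exact h2.symm
    have hle' : L.length ≤ P.dropLast.length := by
      rw [List.length_dropLast]; omega
    have hmem : u ∈ P.take L.length := hLP ▸ huL
    have htk : P.take L.length = P.dropLast.take L.length := by
      conv_lhs => rw [← hPd]
      rw [List.take_append_of_le_length hle']
    rw [htk] at hmem
    exact hnotin ((List.take_sublist _ _).mem hmem)

lemma alt_parity (M : Finset (Sym2 V)) :
    ∀ (l : List (Sym2 V)), l.Chain' (fun e f => e ∈ M ↔ f ∉ M) →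
      ∀ a b, l.head? = some a → l.getLast? = some b →
        ((a ∈ M ↔ b ∈ M) ↔ Odd l.length)
  | [], _, a, b, ha, _ => by simp at ha
  | [x], _, a, b, ha, hb => by
      simp at ha hb; subst ha; subst hb; simp
  | x :: y :: t, hch, a, b, ha, hb => by
      simp only [List.head?_cons, Option.some.injEq] at ha
      subst ha
      rw [List.getLast?_cons_cons] at hb
      simp only [List.Chain', List.isChain_cons_cons] at hch
      have ih := alt_parity M (y :: t) hch.2 y b rfl hb
      have hxy : x ∈ M ↔ y ∉ M := hch.1
      have hlen : (x :: y :: t).length = (y :: t).length + 1 := by simp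
      rw [hlen, Nat.odd_add_one, ← ih]
      tauto

lemma alt_count (M : Finset (Sym2 V)) :
    ∀ (l : List (Sym2 V)), l.Chain' (fun e f => e ∈ M ↔ f ∉ M) →
      (∀ a ∈ l.head?, a ∉ M) → l.countP (fun e => decide (e ∈ M)) = l.length / 2
  | [], _, _ => by simp
  | [x], _, hh => by
      have : x ∉ M := hh x rfl
      simp [List.countP_cons, this]
  | x :: y :: t, hch, hh => by
      have hx : x ∉ M := hh x rfl
      simp only [List.Chain', List.isChain_cons_cons] at hch
      have hy : y ∈ M := by have := hch.1; tauto
      have hch2 := hch.2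
      rw [List.isChain_cons] at hch2
      have ht : ∀ a ∈ t.head?, a ∉ M := by
        intro a ha
        have := hch2.1 a ha
        tauto
      have ih := alt_count M t hch2.2 ht
      simp only [List.countP_cons, List.length_cons, decide_eq_true_eq]
      simp [hx, hy]
      omega

lemma List.getLast?_cons_ne_nil {α : Type*} {a : α} {l : List α} (h : l ≠ []) :
    (a :: l).getLast? = l.getLast? := by
  cases l with
  | nil => exact absurd rfl h
  | cons b t => simp

namespace SimpleGraph.Walk

variable {G : SimpleGraph V}

/-- The end vertex belongs to the last edge. -/
lemma end_mem_last_edge : ∀ {a b : V} (W : G.Walk a b) (e : Sym2 V),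
    W.edges.getLast? = some e → b ∈ e
  | _, _, nil, e, h => by simp at h
  | a, b, cons h' W', e, h => by
    rw [edges_cons] at h
    by_cases hW : W'.edges = []
    · rw [hW] at h
      simp only [List.getLast?_singleton, Option.some.injEq] at h
      have hlen : W'.length = 0 := by
        have := congrArg List.length hW
        simpa [length_edges] using this
      have hb := eq_of_length_eq_zero hlen
      subst hb
      rw [← h]
      simp
    · rw [List.getLast?_cons_ne_nil hW] at h
      exact end_mem_last_edge W' e h

/-- In a walk with nodup support, an edge containing the end vertex is the last edge. -/
lemma edge_end_getLast : ∀ {a b : V} (W : G.Walk a b), W.support.Nodup →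
    ∀ e ∈ W.edges, b ∈ e → W.edges.getLast? = some e
  | _, _, nil, _, e, he, _ => by simp at he
  | a, b, cons h' W', hnd, e, he, hbe => by
    rw [support_cons, List.nodup_cons] at hnd
    rw [edges_cons, List.mem_cons] at he
    rcases he with he | he
    · subst he
      rcases Sym2.mem_iff.1 hbe with hb | hb
      · exact absurd (hb ▸ W'.end_mem_support) hnd.1
      · subst hb
        have : W' = nil := isPath_iff_eq_nil.1 (IsPath.mk' hnd.2)
        subst this
        simp
    · have := edge_end_getLast W' hnd.2 e he hbe
      rw [edges_cons]
      have hne : W'.edges ≠ [] := by rintro hn; rw [hn] at he; simp at he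
      rw [List.getLast?_cons_ne_nil hne]
      exact this

/-- In a walk with nodup support, if the start vertex belongs to the last edge,
the walk has length 1. -/
lemma start_in_last_edge : ∀ {a b : V} (W : G.Walk a b), W.support.Nodup →
    ∀ e : Sym2 V, W.edges.getLast? = some e → a ∈ e → W.length = 1
  | _, _, nil, _, e, he, _ => by simp at he
  | a, b, cons h' W', hnd, e, he, hae => by
    rw [support_cons, List.nodup_cons] at hnd
    by_cases hW : W'.edges = []
    · have : W'.length = 0 := by
        have := congrArg List.length hW
        simpa [length_edges] using this
      simp [this]
    · rw [edges_cons, List.getLast?_cons_ne_nil hW] at he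
      exfalso
      have hmem : e ∈ W'.edges := List.mem_of_getLast? he
      obtain ⟨c, rfl⟩ := Sym2.mem_iff_exists.1 hae
      exact hnd.1 (W'.fst_mem_support_of_mem_edges hmem)

end SimpleGraph.Walk

namespace SimpleGraph.Walk

variable {G : SimpleGraph V}

lemma decomp_at_start {u y v : V} (h : G.Adj u y) (w' : G.Walk y v) (hu : u ∈ w'.support)
    (ht : (w'.takeUntil u hu).support.Nodup) :
    ∃ (x : V) (p : G.Walk u x) (c : G.Walk x x) (q : G.Walk x v),
      (Walk.cons h w' : G.Walk u v) = p.append (c.append q) ∧ 1 ≤ c.length ∧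
        ((p.append c).support.dropLast).Nodup := by
  refine ⟨u, Walk.nil, Walk.cons h (w'.takeUntil u hu), w'.dropUntil u hu, ?_, ?_, ?_⟩
  · rw [Walk.nil_append, Walk.cons_append, Walk.take_spec]
  · simp
  · rw [Walk.nil_append, Walk.support_cons]
    set t := w'.takeUntil u hu with htdef
    have htne : t.support ≠ [] := support_ne_nil _
    obtain ⟨b, s, hbs⟩ := List.exists_cons_of_ne_nil htne
    have hgl : t.support.getLast? = some u := by
      rw [List.getLast?_eq_getLast htne, getLast_support]
    have hdl : t.support.dropLast ++ [u] = t.support :=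
      List.dropLast_append_getLast? u hgl
    have hnd2 : (t.support.dropLast ++ [u]).Nodup := by rw [hdl]; exact ht
    rw [List.nodup_append] at hnd2
    have hcons : (u :: t.support).dropLast = u :: t.support.dropLast := by
      rw [hbs]; simp
    rw [hcons, List.nodup_cons]
    exact ⟨fun hmem => hnd2.2.2 u hmem u (by simp) rfl, hnd2.1⟩

lemma decomp : ∀ {u v : V} (w : G.Walk u v), w.support.Nodup ∨
    ∃ (x : V) (p : G.Walk u x) (c : G.Walk x x) (q : G.Walk x v),
      w = p.append (c.append q) ∧ 1 ≤ c.length ∧ ((p.append c).support.dropLast).Nodup := by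
  intro u v w
  induction w with
  | nil => left; simp
  | @cons u y v h w' ih =>
    rcases ih with hnd | ⟨x, p', c', q', heq, hc1, hnd⟩
    · by_cases hu : u ∈ w'.support
      · right
        apply decomp_at_start h w' hu
        have hsub : (w'.takeUntil u hu).support.Sublist w'.support := by
          conv_rhs => rw [← take_spec w' hu]
          rw [support_append]
          exact List.sublist_append_left _ _
        exact hsub.nodup hnd
      · left
        rw [support_cons, List.nodup_cons]
        exact ⟨hu, hnd⟩
    · set L := (p'.append c').support.dropLast with hLdef
      have h1 : (p'.append c').support ≠ [] := support_ne_nil _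
      have hgl : (p'.append c').support.getLast? = some x := by
        rw [List.getLast?_eq_getLast h1, getLast_support]
      have hLx : L ++ [x] = (p'.append c').support :=
        List.dropLast_append_getLast? x hgl
      have hws : w'.support = L ++ ([x] ++ q'.support.tail) := by
        rw [heq, support_append, tail_support_append, ← List.append_assoc, ← support_append, ← hLx,
          List.append_assoc]
      by_cases hu : u ∈ L
      · right
        have hu' : u ∈ w'.support := by
          rw [hws]; exact List.mem_append_left _ hu
        apply decomp_at_start h w' hu'
        have hts : (w'.takeUntil u hu').support ++ (w'.dropUntil u hu').support.tail
            = L ++ ([x] ++ q'.support.tail) := by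
          rw [← support_append, take_spec, hws]
        have hlast : (w'.takeUntil u hu').support.getLast? = some u := by
          have hne := support_ne_nil (w'.takeUntil u hu')
          rw [List.getLast?_eq_getLast hne, getLast_support]
        exact prefix_nodup_of_first_occ hts hnd hu
          (count_support_takeUntil_eq_one w' hu') hlast
      · right
        refine ⟨x, Walk.cons h p', c', q', by rw [Walk.cons_append, heq], hc1, ?_⟩
        have hsup : ((Walk.cons h p').append c').support = u :: (p'.append c').support := by
          rw [Walk.cons_append, support_cons]
        rw [hsup]
        obtain ⟨b, s, hbs⟩ := List.exists_cons_of_ne_nil h1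
        have h2 : ((u :: (p'.append c').support)).dropLast
            = u :: (p'.append c').support.dropLast := by
          rw [hbs]; simp
        rw [h2, List.nodup_cons]
        exact ⟨hu, hnd⟩

end SimpleGraph.Walk

lemma isBlossom_of_odd (G : SimpleGraph V) (M : Finset (Sym2 V)) (hM : IsMatching' G M)
    {x : V} (c : G.Walk x x) (hc1 : 1 ≤ c.length)
    (hch : c.edges.Chain' (fun e f => e ∈ M ↔ f ∉ M))
    (htail : c.support.tail.Nodup) (hodd : Odd c.length) :
    IsBlossom G M c := by
  cases c with
  | nil => simp at hc1
  | @cons _ y _ hadj d =>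
    rw [Walk.support_cons, List.tail_cons] at htail
    have hd1 : 1 ≤ d.length := by
      rcases Nat.eq_zero_or_pos d.length with h0 | h0
      · exact absurd (Walk.eq_of_length_eq_zero h0) hadj.ne'
      · exact h0
    have hdene : d.edges ≠ [] := by
      intro hn
      have := congrArg List.length hn
      simp only [Walk.length_edges, List.length_nil] at this
      omega
    have hgl2 : d.edges.getLast? = some (d.edges.getLast hdene) :=
      List.getLast?_eq_getLast hdene
    set eL := d.edges.getLast hdene with heLdef
    have hglc : (Walk.cons hadj d).edges.getLast? = some eL := by
      rw [Walk.edges_cons, List.getLast?_cons_ne_nil hdene]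
      exact hgl2
    have hpar := alt_parity M (Walk.cons hadj d).edges hch s(x, y) eL
      (by rw [Walk.edges_cons]; rfl) hglc
    rw [Walk.length_edges] at hpar
    have key : s(x, y) ∉ d.edges := by
      intro hmem
      have h1 := d.edge_end_getLast htail s(x, y) hmem (by simp)
      have h2 := d.start_in_last_edge htail s(x, y) h1 (by simp)
      rw [Walk.length_cons, h2, Nat.odd_iff] at hodd
      simp at hodd
    have hxeL : x ∈ eL := d.end_mem_last_edge eL hgl2
    have heLd : eL ∈ d.edges := List.mem_of_getLast? hgl2
    have hhne : s(x, y) ∉ M := by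
      intro hin
      have heLM : eL ∈ M := by
        have := hpar.2 hodd
        tauto
      have hne : s(x, y) ≠ eL := fun hEq => key (hEq ▸ heLd)
      exact hM.2 _ hin _ heLM hne x ⟨by simp, hxeL⟩
    have heLnM : eL ∉ M := by
      intro hin
      exact hhne (by have := hpar.2 hodd; tauto)
    have hdpath : d.IsPath := Walk.IsPath.mk' htail
    have hcyc : (Walk.cons hadj d).IsCycle :=
      (Walk.cons_isCycle_iff d hadj).2 ⟨hdpath, key⟩
    have hnodupE : (Walk.cons hadj d).edges.Nodup := by
      rw [Walk.edges_cons, List.nodup_cons]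
      exact ⟨key, Walk.edges_nodup_of_support_nodup htail⟩
    refine ⟨hcyc, hodd, hch, ?_, ?_⟩
    · have hcnt := alt_count M (Walk.cons hadj d).edges hch ?_
      · have hfin : (Walk.cons hadj d).edges.toFinset ∩ M
            = ((Walk.cons hadj d).edges.filter (fun e => decide (e ∈ M))).toFinset := by
          ext e
          simp [List.mem_filter]
        rw [hfin, List.toFinset_card_of_nodup (hnodupE.filter _),
          ← List.countP_eq_length_filter, hcnt, Walk.length_edges]
        obtain ⟨k, hk⟩ := hodd
        omega
      · intro a ha
        rw [Walk.edges_cons] at ha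
        simp only [List.head?_cons, Option.mem_def, Option.some.injEq] at ha
        exact ha ▸ hhne
    · intro e he heM
      rw [Walk.edges_cons, List.mem_cons] at he
      rcases he with rfl | he
      · exact absurd heM hhne
      · intro hxe
        have h1 := d.edge_end_getLast htail e he hxe
        rw [hgl2] at h1
        have : eL = e := by injection h1
        exact heLnM (this ▸ heM)

theorem stmt5_aux (G : SimpleGraph V) (M : Finset (Sym2 V)) (hM : IsMatching' G M) :
    ∀ n : ℕ, ∀ {u v : V} (w : G.Walk u v), w.length ≤ n →
      IsAltWalk M w → StartsUnmatched M w → EndsUnmatched M w →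
      (∃ p : G.Walk u v, p.IsPath ∧ IsAltWalk M p ∧
          StartsUnmatched M p ∧ EndsUnmatched M p) ∨
      (∃ (w' : G.Walk u v), IsAltWalk M w' ∧ StartsUnmatched M w' ∧ EndsUnmatched M w' ∧
        ∃ (x : V) (p : G.Walk u x) (c : G.Walk x x) (q : G.Walk x v),
          w' = p.append (c.append q) ∧ p.IsPath ∧ IsBlossom G M c ∧
          ∀ y ∈ p.support, y ∈ c.support → y = x) := by
  intro n
  induction n using Nat.strong_induction_on with
  | _ n ih =>
  intro u v w hlen halt hs he
  rcases w.decomp with hnd | ⟨x, p, c, q, hw, hc1, hnd⟩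
  · exact Or.inl ⟨w, Walk.IsPath.mk' hnd, halt, hs, he⟩
  -- support facts
  have hcstne : c.support.tail ≠ [] := by
    intro hn
    have h2 : c.support.tail.length = 0 := by rw [hn]; rfl
    rw [List.length_tail, Walk.length_support] at h2
    omega
  obtain ⟨b₁, s₁, hbs⟩ := List.exists_cons_of_ne_nil hcstne
  have hdrop : (p.append c).support.dropLast = p.support ++ c.support.tail.dropLast := by
    rw [Walk.support_append, hbs, List.dropLast_append_cons, ← hbs]
  rw [hdrop, List.nodup_append] at hnd
  have hps : p.support.Nodup := hnd.1
  have hxp : x ∈ p.support := p.end_mem_support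
  have hglt : c.support.tail.getLast? = some x := by
    have h1 : c.support.getLast? = some x := by
      rw [List.getLast?_eq_getLast (Walk.support_ne_nil c), Walk.getLast_support]
    rw [Walk.support_eq_cons c, List.getLast?_cons_ne_nil hcstne] at h1
    exact h1
  have htx : c.support.tail.dropLast ++ [x] = c.support.tail :=
    List.dropLast_append_getLast? x hglt
  have hctail : c.support.tail.Nodup := by
    rw [← htx, List.nodup_append]
    refine ⟨hnd.2.1, by simp, ?_⟩
    intro a ha b hb hab
    rw [List.mem_singleton] at hb
    exact hnd.2.2 _ hxp _ ha (hab.trans hb).symm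
  have hdisj : ∀ y ∈ p.support, y ∈ c.support → y = x := by
    intro z hz hzc
    rw [Walk.support_eq_cons, List.mem_cons] at hzc
    rcases hzc with rfl | hzc
    · rfl
    · rw [← htx, List.mem_append, List.mem_singleton] at hzc
      rcases hzc with hzc | rfl
      · exact (hnd.2.2 z hz z hzc rfl).elim
      · rfl
  -- edge facts
  have hwE : w.edges = p.edges ++ (c.edges ++ q.edges) := by
    rw [hw, Walk.edges_append, Walk.edges_append]
  have hcene : c.edges ≠ [] := by
    intro hn
    have h2 : c.edges.length = 0 := by rw [hn]; rfl
    rw [Walk.length_edges] at h2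
    omega
  have halt' : (p.edges ++ (c.edges ++ q.edges)).Chain' (fun e f => e ∈ M ↔ f ∉ M) := by
    rw [← hwE]; exact halt
  obtain ⟨hchp, hchcq, hlink1⟩ := List.isChain_append.1 halt'
  obtain ⟨hchc, hchq, hlink2⟩ := List.isChain_append.1 hchcq
  obtain ⟨e₁, t₁, hce⟩ := List.exists_cons_of_ne_nil hcene
  have hhead : c.edges.head? = some e₁ := by rw [hce]; rfl
  have hgl2 : c.edges.getLast? = some (c.edges.getLast hcene) :=
    List.getLast?_eq_getLast hcene
  set eL := c.edges.getLast hcene with heLdef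
  have hpar := alt_parity M c.edges hchc e₁ eL hhead hgl2
  rw [Walk.length_edges] at hpar
  by_cases hodd : Odd c.length
  · -- blossom case : w itself works
    refine Or.inr ⟨w, halt, hs, he, x, p, c, q, hw, Walk.IsPath.mk' hps, ?_, hdisj⟩
    exact isBlossom_of_odd G M hM c hc1 hchc hctail hodd
  · -- even case : remove the closed walk c and recurse
    have hparn : ¬(e₁ ∈ M ↔ eL ∈ M) := fun hiff => hodd (hpar.1 hiff)
    have hw₂E : (p.append q).edges = p.edges ++ q.edges := Walk.edges_append p q
    have halt₂ : IsAltWalk M (p.append q) := by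
      show (p.append q).edges.Chain' _
      rw [hw₂E]
      refine List.isChain_append.2 ⟨hchp, hchq, ?_⟩
      intro a ha b hb
      have h1 : (a ∈ M ↔ e₁ ∉ M) := by
        refine hlink1 a ha e₁ ?_
        rw [List.head?_append_of_ne_nil _ hcene, hhead]
        rfl
      have h2 : (eL ∈ M ↔ b ∉ M) := hlink2 eL hgl2 b hb
      tauto
    have hs₂ : StartsUnmatched M (p.append q) := by
      obtain ⟨es, hes, hesnM⟩ := hs
      rw [hwE] at hes
      by_cases hpe : p.edges = []
      · rw [hpe, List.nil_append, List.head?_append_of_ne_nil _ hcene, hhead] at hes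
        have he₁ : e₁ ∉ M := by
          have : e₁ = es := by injection hes
          rw [this]; exact hesnM
        have heLM : eL ∈ M := by tauto
        by_cases hqe : q.edges = []
        · exfalso
          obtain ⟨ee, hee, heenM⟩ := he
          rw [hwE, hpe, hqe, List.nil_append, List.append_nil, hgl2] at hee
          have : eL = ee := by injection hee
          exact heenM (this ▸ heLM)
        · obtain ⟨b₀, t₀, hqce⟩ := List.exists_cons_of_ne_nil hqe
          refine ⟨b₀, ?_, ?_⟩
          · rw [hw₂E, hpe, List.nil_append, hqce]; rfl
          · have h2 : (eL ∈ M ↔ b₀ ∉ M) := hlink2 eL hgl2 b₀ (by rw [hqce]; rfl)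
            tauto
      · refine ⟨es, ?_, hesnM⟩
        rw [hw₂E, List.head?_append_of_ne_nil _ hpe]
        rw [List.head?_append_of_ne_nil _ hpe] at hes
        exact hes
    have he₂ : EndsUnmatched M (p.append q) := by
      obtain ⟨ee, hee, heenM⟩ := he
      rw [hwE] at hee
      by_cases hqe : q.edges = []
      · rw [hqe, List.append_nil, List.getLast?_append_of_ne_nil _ hcene, hgl2] at hee
        have heL : eL ∉ M := by
          have : eL = ee := by injection hee
          rw [this]; exact heenM
        have he₁M : e₁ ∈ M := by tauto
        by_cases hpe : p.edges = []
        · exfalso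
          obtain ⟨es, hes, hesnM⟩ := hs
          rw [hwE, hpe, hqe, List.nil_append, List.append_nil, hhead] at hes
          have h3 : e₁ = es := by injection hes
          exact hesnM (h3 ▸ he₁M)
        · obtain ⟨a₀, ha₀⟩ : ∃ a₀, p.edges.getLast? = some a₀ :=
            ⟨p.edges.getLast hpe, List.getLast?_eq_getLast hpe⟩
          refine ⟨a₀, ?_, ?_⟩
          · rw [hw₂E, hqe, List.append_nil]; exact ha₀
          · have h1 : (a₀ ∈ M ↔ e₁ ∉ M) := by
              refine hlink1 a₀ ha₀ e₁ ?_
              rw [List.head?_append_of_ne_nil _ hcene, hhead]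
              rfl
            tauto
      · refine ⟨ee, ?_, heenM⟩
        rw [hw₂E, List.getLast?_append_of_ne_nil _ hqe]
        have hcqne : c.edges ++ q.edges ≠ [] := by simp [hcene]
        rw [List.getLast?_append_of_ne_nil _ hcqne, List.getLast?_append_of_ne_nil _ hqe] at hee
        exact hee
    have hlt : (p.append q).length < n := by
      have h1 : w.length = p.length + (c.length + q.length) := by
        rw [hw, Walk.length_append, Walk.length_append]
      have h2 : (p.append q).length = p.length + q.length := Walk.length_append p q
      omega
    exact ih (p.append q).length hlt (p.append q) le_rfl halt₂ hs₂ he₂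

/-- From an `nn`-alternating walk one extracts either an `nn`-alternating
path, or an `nn`-alternating walk whose first self-intersection forms an `M`-blossom. -/
theorem stmt_5 {V : Type*} [DecidableEq V] (G : SimpleGraph V) (M : Finset (Sym2 V))
    (hM : IsMatching' G M) (u v : V) (w : G.Walk u v)
    (halt : IsAltWalk M w) (hs : StartsUnmatched M w) (he : EndsUnmatched M w) :
    (∃ p : G.Walk u v, p.IsPath ∧ IsAltWalk M p ∧
        StartsUnmatched M p ∧ EndsUnmatched M p) ∨
    (∃ (w' : G.Walk u v), IsAltWalk M w' ∧ StartsUnmatched M w' ∧ EndsUnmatched M w' ∧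
      ∃ (x : V) (p : G.Walk u x) (c : G.Walk x x) (q : G.Walk x v),
        w' = p.append (c.append q) ∧ p.IsPath ∧ IsBlossom G M c ∧
        ∀ y ∈ p.support, y ∈ c.support → y = x) := by
  exact stmt5_aux G M hM w.length w le_rfl halt hs he
end

section
/- Let G be a graph with a perfect matching. Then G has the König–Egerváry property if and only if G has no M-Jposy relative to any perfect matching M of G. -/
open SimpleGraph

variable {V : Type*} [DecidableEq V]

set_option linter.unusedSectionVars false
set_option linter.unusedVariables false




private lemma ke7_alt_head_last (M : Finset (Sym2 V)) :
    ∀ (l : List (Sym2 V)), l.Chain' (fun e f => e ∈ M ↔ f ∉ M) →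
      ∀ e, l.head? = some e → ∀ f, l.getLast? = some f →
        ((e ∈ M ↔ f ∈ M) ↔ Odd l.length)
  | [] => by simp
  | [a] => by
      intro _ e he f hf
      simp only [List.head?_cons, Option.some.injEq] at he
      simp only [List.getLast?_singleton, Option.some.injEq] at hf
      subst he; subst hf
      simp
  | a :: b :: t => by
      intro hc e he f hf
      have hab : (a ∈ M ↔ b ∉ M) := (List.isChain_cons_cons.mp hc).1
      have IH := ke7_alt_head_last M (b :: t) (List.isChain_cons_cons.mp hc).2 b rfl f
        (by rwa [List.getLast?_cons_cons] at hf)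
      simp only [List.head?_cons, Option.some.injEq] at he
      subst he
      simp only [List.length_cons] at IH ⊢
      rw [Nat.odd_add_one]
      tauto

private lemma ke7_start_mem_head_edge {G : SimpleGraph V} :
    ∀ {a b : V} (W : G.Walk a b) (e : Sym2 V), W.edges.head? = some e → a ∈ e
  | _, _, Walk.nil, e => by simp
  | _, _, Walk.cons h q, e => by
      intro he
      simp only [Walk.edges_cons, List.head?_cons, Option.some.injEq] at he
      subst he; simp

private lemma ke7_end_mem_last_edge {G : SimpleGraph V} {a b : V} (W : G.Walk a b)
    (e : Sym2 V) (he : W.edges.getLast? = some e) : b ∈ e := by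
  apply ke7_start_mem_head_edge W.reverse e
  rw [Walk.edges_reverse, List.head?_reverse]; exact he

private lemma ke7_mem_support_of_mem_edges {G : SimpleGraph V} {a b : V} (W : G.Walk a b)
    {v : V} {e : Sym2 V} (he : e ∈ W.edges) (hv : v ∈ e) : v ∈ W.support := by
  induction e with
  | _ x y =>
    rcases Sym2.mem_iff.mp hv with rfl | rfl
    · exact W.fst_mem_support_of_mem_edges he
    · exact W.snd_mem_support_of_mem_edges he

private lemma ke7_start_edge_unique {G : SimpleGraph V} :
    ∀ {a b : V} (P : G.Walk a b), P.support.Nodup →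
      ∀ {e : Sym2 V}, e ∈ P.edges → a ∈ e → P.edges.head? = some e
  | _, _, Walk.nil => by simp
  | _, _, Walk.cons h q => by
      intro hP e he ha
      simp only [Walk.edges_cons] at he ⊢
      rcases List.mem_cons.mp he with rfl | he
      · rfl
      · exfalso
        have := ke7_mem_support_of_mem_edges q he ha
        simp only [Walk.support_cons, List.nodup_cons] at hP
        exact hP.1 this

private lemma ke7_end_edge_unique {G : SimpleGraph V} {a b : V} (P : G.Walk a b)
    (hP : P.support.Nodup) {e : Sym2 V} (he : e ∈ P.edges) (hb : b ∈ e) :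
    P.edges.getLast? = some e := by
  have := ke7_start_edge_unique P.reverse
    (by rw [Walk.support_reverse]; exact List.nodup_reverse.mpr hP)
    (by rw [Walk.edges_reverse]; exact List.mem_reverse.mpr he) hb
  rwa [Walk.edges_reverse, List.head?_reverse] at this

/-- closed path implies nil -/
private lemma ke7_closed_nodup_nil {G : SimpleGraph V} {a : V} (P : G.Walk a a)
    (hP : P.support.Nodup) : P.Nil := by
  cases P with
  | nil => exact Walk.Nil.nil
  | cons h q =>
    exfalso
    simp only [Walk.support_cons, List.nodup_cons] at hP
    exact hP.1 q.end_mem_support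

/-- in a path, if the last edge contains the start vertex then the path has length 1 -/
private lemma ke7_last_edge_start {G : SimpleGraph V} :
    ∀ {a b : V} (P : G.Walk a b), P.support.Nodup →
      ∀ {e : Sym2 V}, P.edges.getLast? = some e → a ∈ e → P.length = 1
  | _, _, Walk.nil => by simp
  | _, _, Walk.cons h Walk.nil => by intro _ e _ _; simp
  | _, _, Walk.cons h (Walk.cons h' q) => by
      intro hP e he ha
      exfalso
      simp only [Walk.edges_cons] at he
      rw [List.getLast?_cons_cons] at he
      have hmem : e ∈ (Walk.cons h' q).edges := by
        have : e ∈ (Walk.cons h' q).edges ++ [] := by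
          simp [List.mem_of_getLast? he]
        simpa using this
      have := ke7_mem_support_of_mem_edges _ hmem ha
      simp only [Walk.support_cons, List.nodup_cons] at hP
      exact hP.1 (by simpa using this)

private lemma ke7_alt_count (M : Finset (Sym2 V)) :
    ∀ (l : List (Sym2 V)), l.Chain' (fun e f => e ∈ M ↔ f ∉ M) →
      (∀ e, l.head? = some e → e ∉ M) → Odd l.length →
      2 * (l.filter (· ∈ M)).length + 1 = l.length
  | [] => by simp
  | [a] => by
      intro _ hh _
      have ha := hh a rfl
      simp [List.filter, ha]
  | [a, b] => by intro _ _ hodd; simp [Nat.odd_iff] at hodd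
  | a :: b :: c :: t => by
      intro hc hh hodd
      have ha := hh a rfl
      have hab : (a ∈ M ↔ b ∉ M) := (List.isChain_cons_cons.mp hc).1
      have hc2 := (List.isChain_cons_cons.mp hc).2
      have hbc : (b ∈ M ↔ c ∉ M) := (List.isChain_cons_cons.mp hc2).1
      have hb : b ∈ M := by tauto
      have hcM : c ∉ M := by tauto
      have IH := ke7_alt_count M (c :: t) (List.isChain_cons_cons.mp hc2).2
        (by intro e he; simp only [List.head?_cons, Option.some.injEq] at he; subst he; exact hcM)
        (by simp only [List.length_cons] at hodd ⊢
            rw [Nat.odd_iff] at hodd ⊢; omega)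
      simp only [List.filter_cons, decide_eq_true_eq, ha, hb, if_pos, if_neg,
        not_false_eq_true, List.length_cons] at IH ⊢
      omega

private lemma ke7_split {G : SimpleGraph V} :
    ∀ {a b : V} (W : G.Walk a b), ¬W.support.Nodup →
      ∃ (u : V) (Pre : G.Walk a u) (Cyc : G.Walk u u) (Suf : G.Walk u b),
        W = Pre.append (Cyc.append Suf) ∧ Cyc.support.tail.Nodup ∧ ¬Cyc.Nil
  | _, _, Walk.nil => by simp
  | a, b, Walk.cons h q => by
      intro hW
      by_cases hq : q.support.Nodup
      · by_cases ha : a ∈ q.support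
        · refine ⟨a, Walk.nil, Walk.cons h (q.takeUntil a ha), q.dropUntil a ha, ?_, ?_, Walk.not_nil_cons⟩
          · rw [Walk.nil_append, Walk.cons_append, Walk.take_spec]
          · simp only [Walk.support_cons, List.tail_cons]
            have hpre : (q.takeUntil a ha).support <+: q.support := by
              refine ⟨(q.dropUntil a ha).support.tail, ?_⟩
              rw [← Walk.support_append, Walk.take_spec]
            exact hpre.sublist.nodup hq
        · exact absurd (by simp [List.nodup_cons, ha, hq]) hW
      · obtain ⟨u, Pre, Cyc, Suf, heq, hnd, hnn⟩ := ke7_split q hq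
        exact ⟨u, Walk.cons h Pre, Cyc, Suf, by rw [Walk.cons_append, heq], hnd, hnn⟩
private lemma ke7_edges_ne_nil_of_pos {G : SimpleGraph V} {a b : V} {W : G.Walk a b}
    (h : 0 < W.length) : W.edges ≠ [] := by
  intro h0
  have := W.length_edges
  rw [h0] at this
  simp at this
  omega

private lemma ke7_matched_contra {G : SimpleGraph V} {M : Finset (Sym2 V)}
    (hM : IsMatching' G M) {u : V} :
    ∀ (Cyc : G.Walk u u), Cyc.support.tail.Nodup → Odd Cyc.length →
      ∀ {e₁ e₂ : Sym2 V}, Cyc.edges.head? = some e₁ → Cyc.edges.getLast? = some e₂ →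
        e₁ ∈ M → e₂ ∈ M → False
  | Walk.nil => by simp
  | Walk.cons hadj C' => by
      rename_i w
      intro hnd hodd e₁ e₂ he₁ he₂ h1M h2M
      simp only [Walk.edges_cons, List.head?_cons, Option.some.injEq] at he₁
      subst he₁
      have hu2 : u ∈ e₂ := ke7_end_mem_last_edge _ e₂ he₂
      have hu1 : u ∈ s(u, w) := by simp
      have h12 : s(u, w) = e₂ := by
        by_contra hne
        exact hM.2 _ h1M e₂ h2M hne u ⟨hu1, hu2⟩
      rcases hC'e : C'.edges with _ | ⟨x, rest⟩
      · have : C'.length = 0 := by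
          have := C'.length_edges; rw [hC'e] at this; simpa using this.symm
        have huu := SimpleGraph.Walk.eq_of_length_eq_zero this
        subst huu
        exact G.irrefl hadj
      · have hlast : C'.edges.getLast? = some e₂ := by
          rw [Walk.edges_cons, hC'e, List.getLast?_cons_cons] at he₂
          rw [hC'e]; exact he₂
        have hndC : C'.support.Nodup := by simpa using hnd
        have hw : w ∈ s(u, w) := Sym2.mem_mk_right _ _
        have hlen := ke7_last_edge_start C' hndC (by rw [← h12] at hlast; exact hlast) hw
        rw [Walk.length_cons, hlen] at hodd
        simp [Nat.odd_iff] at hodd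

private lemma ke7_blossom_case {G : SimpleGraph V} {M : Finset (Sym2 V)}
    (hM : IsMatching' G M) {u : V} :
    ∀ (Cyc : G.Walk u u), Cyc.support.tail.Nodup → Odd Cyc.length →
      IsAltWalk M Cyc →
      ∀ {e₁ e₂ : Sym2 V}, Cyc.edges.head? = some e₁ → Cyc.edges.getLast? = some e₂ →
        e₁ ∉ M → e₂ ∉ M → IsBlossom G M Cyc
  | Walk.nil => by simp
  | Walk.cons hadj C' => by
      rename_i w
      intro hnd hodd halt e₁ e₂ he₁ he₂ h1M h2M
      simp only [Walk.edges_cons, List.head?_cons, Option.some.injEq] at he₁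
      subst he₁
      have hndC : C'.support.Nodup := by simpa using hnd
      have hpath : C'.IsPath := (Walk.isPath_def C').mpr hndC
      rcases hC'e : C'.edges with _ | ⟨x, rest⟩
      · exfalso
        have : C'.length = 0 := by
          have := C'.length_edges; rw [hC'e] at this; simpa using this.symm
        have huu := SimpleGraph.Walk.eq_of_length_eq_zero this
        subst huu
        exact G.irrefl hadj
      · have hC'ne : C'.edges ≠ [] := by rw [hC'e]; simp
        have hlast : C'.edges.getLast? = some e₂ := by
          rw [Walk.edges_cons, hC'e, List.getLast?_cons_cons] at he₂
          rw [hC'e]; exact he₂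
        have hnotmem : s(u, w) ∉ C'.edges := by
          intro hmem
          have hu1 : u ∈ s(u, w) := by simp
          have hgl := ke7_end_edge_unique C' hndC hmem hu1
          have hw : w ∈ s(u, w) := Sym2.mem_mk_right _ _
          have hlen := ke7_last_edge_start C' hndC hgl hw
          rw [Walk.length_cons, hlen] at hodd
          simp [Nat.odd_iff] at hodd
        have hcyc : (Walk.cons hadj C').IsCycle := by
          rw [Walk.cons_isCycle_iff]
          exact ⟨hpath, hnotmem⟩
        refine ⟨hcyc, hodd, halt, ?_, ?_⟩
      
        · have hnodupE : (Walk.cons hadj C').edges.Nodup :=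
            (Walk.isTrail_def _).mp hcyc.isCircuit.isTrail
          have hcount := ke7_alt_count M (Walk.cons hadj C').edges halt
            (by intro e he
                simp only [Walk.edges_cons, List.head?_cons, Option.some.injEq] at he
                rw [← he]; exact h1M)
            (by rw [Walk.length_edges]; exact hodd)
          rw [Walk.length_edges] at hcount
          have hcards : ((Walk.cons hadj C').edges.toFinset ∩ M).card
              = (List.filter (fun x => decide (x ∈ M)) (Walk.cons hadj C').edges).length := by
            have h1 : (Walk.cons hadj C').edges.toFinset ∩ M
                = Finset.filter (fun x => x ∈ M) (Walk.cons hadj C').edges.toFinset := by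
              rw [Finset.filter_mem_eq_inter]
            have h2 : (List.filter (fun x => decide (x ∈ M)) (Walk.cons hadj C').edges).toFinset
                = Finset.filter (fun x => x ∈ M) (Walk.cons hadj C').edges.toFinset := by
              simp [List.toFinset_filter]
            rw [h1, ← h2, List.toFinset_card_of_nodup (hnodupE.filter _)]
          rw [hcards]
          exact hcount
        · intro e hmem heM hue
          rw [Walk.edges_cons, List.mem_cons] at hmem
          rcases hmem with rfl | hmem
          · exact h1M heM
          · have hgl := ke7_end_edge_unique C' hndC hmem hue
            rw [hgl] at hlast
            injection hlast with hh
            rw [hh] at heM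
            exact h2M heM
private lemma ke7_head_some {α : Type*} {l : List α} (h : l ≠ []) : ∃ e, l.head? = some e := by
  cases l with
  | nil => exact absurd rfl h
  | cons a t => exact ⟨a, rfl⟩

private lemma ke7_getLast_some {α : Type*} {l : List α} (h : l ≠ []) : ∃ e, l.getLast? = some e := by
  have : ∃ e, l.reverse.head? = some e := ke7_head_some (by simpa using h)
  rwa [List.head?_reverse] at this

private lemma ke7_extract {G : SimpleGraph V} {M : Finset (Sym2 V)}
    (hM : IsMatching' G M) {v : V} :
    ∀ (n : ℕ) (O : G.Walk v v), O.length ≤ n → Odd O.length → IsAltWalk M O →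
      StartsUnmatched M O → EndsUnmatched M O →
      ∃ (b : V) (c : G.Walk b b) (A : G.Walk v b),
        IsBlossom G M c ∧ IsAltWalk M A ∧
          (A.Nil ∨ (StartsUnmatched M A ∧ EndsMatched M A)) := by
  intro n
  induction n with
  | zero =>
    intro O hln hodd _ _ _
    rw [Nat.odd_iff] at hodd; omega
  | succ n IH =>
    intro O hln hodd halt hsu heu
    have hnodup : ¬O.support.Nodup := by
      cases O with
      | nil => rw [Nat.odd_iff] at hodd; simp at hodd
      | cons h q =>
        simp only [Walk.support_cons, List.nodup_cons]
        intro hn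
        exact hn.1 q.end_mem_support
    obtain ⟨u, Pre, Cyc, Suf, heq, hnd, hnn⟩ := ke7_split O hnodup
    have hE : O.edges = Pre.edges ++ (Cyc.edges ++ Suf.edges) := by
      rw [heq, Walk.edges_append, Walk.edges_append]
    have hL : O.length = Pre.length + (Cyc.length + Suf.length) := by
      rw [heq, Walk.length_append, Walk.length_append]
    have hCycpos : 0 < Cyc.length := by
      by_contra hc
      exact hnn (Walk.nil_iff_length_eq.mpr (by omega))
    have halt' := halt
    rw [IsAltWalk, hE, List.Chain', List.isChain_append] at halt'
    obtain ⟨cPre, hrest, J1⟩ := halt'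
    rw [List.isChain_append] at hrest
    obtain ⟨cCyc, cSuf, J2⟩ := hrest
    have hCE : Cyc.edges ≠ [] := ke7_edges_ne_nil_of_pos hCycpos
    obtain ⟨e₁, he₁⟩ := ke7_head_some hCE
    obtain ⟨e₂, he₂⟩ := ke7_getLast_some hCE
    have hstat := ke7_alt_head_last M Cyc.edges cCyc e₁ he₁ e₂ he₂
    rw [Cyc.length_edges] at hstat
    obtain ⟨eo, heo, heoM⟩ := hsu
    obtain ⟨el, hel, helM⟩ := heu
    have hheadCS : (Cyc.edges ++ Suf.edges).head? = some e₁ := by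
      rw [List.head?_append, he₁, Option.some_or]
    rcases Nat.even_or_odd Cyc.length with hev | hodd'
    · -- even cycle: splice it out and recurse
      have hne : ¬(e₁ ∈ M ↔ e₂ ∈ M) := by
        rw [hstat]; exact (Nat.not_odd_iff_even.mpr hev)
      have hCge2 : 2 ≤ Cyc.length := by
        rcases hev with ⟨k, hk⟩; omega
      set O' := Pre.append Suf with hO'
      have hE' : O'.edges = Pre.edges ++ Suf.edges := Walk.edges_append _ _
      have hL' : O'.length = Pre.length + Suf.length := Walk.length_append _ _
      have hlen' : O'.length ≤ n := by omega
      have hodd'' : Odd O'.length := by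
        rw [Nat.odd_iff] at hodd ⊢
        rw [Nat.even_iff] at hev
        omega
      have hO'ne : O'.edges ≠ [] := ke7_edges_ne_nil_of_pos (by
        rw [Nat.odd_iff] at hodd''; omega)
      have haltO' : IsAltWalk M O' := by
        rw [IsAltWalk, hE', List.Chain', List.isChain_append]
        refine ⟨cPre, cSuf, ?_⟩
        intro x hx y hy
        have hJ1 := J1 x hx e₁ hheadCS
        have hJ2 := J2 e₂ he₂ y hy
        rcases Classical.em (e₁ ∈ M) with h1 | h1 <;>
          rcases Classical.em (e₂ ∈ M) with h2 | h2
        · exact absurd (iff_of_true h1 h2) hne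
        · exact iff_of_false (fun hx' => (hJ1.mp hx') h1) (fun hy' => h2 (hJ2.mpr hy'))
        · exact iff_of_true (hJ1.mpr h1) (hJ2.mp h2)
        · exact absurd (iff_of_false h1 h2) hne
      have hsuO' : StartsUnmatched M O' := by
        rcases hPree : Pre.edges with _ | ⟨pe, pt⟩
        · -- O starts with Cyc, so e₁ = eo ∉ M, hence e₂ ∈ M; O' starts with Suf
          have he1o : e₁ = eo := by
            rw [hE, hPree, List.nil_append, hheadCS] at heo
            exact Option.some.inj heo
          have h2M : e₂ ∈ M := by
            by_contra h2
            exact hne (iff_of_false (by rw [he1o]; exact heoM) h2)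
          have hSufne : Suf.edges ≠ [] := by
            rw [hE', hPree, List.nil_append] at hO'ne
            exact hO'ne
          obtain ⟨y, hy⟩ := ke7_head_some hSufne
          refine ⟨y, ?_, ?_⟩
          · rw [hE', hPree, List.nil_append]; exact hy
          · have := J2 e₂ he₂ y hy
            exact this.mp h2M
        · refine ⟨eo, ?_, heoM⟩
          rw [hE', List.head?_append, hPree]
          rw [hE, List.head?_append, hPree] at heo
          exact heo
      have heuO' : EndsUnmatched M O' := by
        rcases hSufe : Suf.edges with _ | ⟨se, st⟩
        · -- O ends with Cyc, so e₂ = el ∉ M, hence e₁ ∈ M; O' ends with Pre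
          have he2o : e₂ = el := by
            rw [hE, hSufe, List.append_nil, List.getLast?_append, he₂, Option.some_or] at hel
            exact Option.some.inj hel
          have h1M : e₁ ∈ M := by
            by_contra h1
            exact hne (iff_of_false h1 (by rw [he2o]; exact helM))
          have hPrene : Pre.edges ≠ [] := by
            rw [hE', hSufe, List.append_nil] at hO'ne
            exact hO'ne
          obtain ⟨y, hy⟩ := ke7_getLast_some hPrene
          refine ⟨y, ?_, ?_⟩
          · rw [hE', hSufe, List.append_nil]; exact hy
          · have := J1 y hy e₁ hheadCS
            exact fun hy' => (this.mp hy') h1M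
        · have hSufne : Suf.edges ≠ [] := by rw [hSufe]; simp
          obtain ⟨y, hy⟩ := ke7_getLast_some hSufne
          have hyel : y = el := by
            rw [hE, List.getLast?_append, List.getLast?_append, hy, Option.some_or, Option.some_or] at hel
            exact Option.some.inj hel
          refine ⟨el, ?_, helM⟩
          rw [hE', List.getLast?_append, hy, Option.some_or, hyel]
      exact IH O' hlen' hodd'' haltO' hsuO' heuO'
    · -- odd cycle: it is (or yields) a blossom
      have hsame : e₁ ∈ M ↔ e₂ ∈ M := hstat.mpr hodd'
      by_cases h1M : e₁ ∈ M
      · exact absurd (ke7_matched_contra hM Cyc hnd hodd' he₁ he₂ h1M (hsame.mp h1M)) not_false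
      · have h2M : e₂ ∉ M := fun h => h1M (hsame.mpr h)
        have hbl := ke7_blossom_case hM Cyc hnd hodd' cCyc he₁ he₂ h1M h2M
        refine ⟨u, Cyc, Pre, hbl, cPre, ?_⟩
        rcases hPree : Pre.edges with _ | ⟨pe, pt⟩
        · left
          rw [Walk.nil_iff_length_eq]
          have := Pre.length_edges
          rw [hPree] at this
          simpa using this.symm
        · right
          constructor
          · refine ⟨eo, ?_, heoM⟩
            rw [hE, List.head?_append, hPree] at heo
            rw [hPree]
            exact heo
          · have hPrene : Pre.edges ≠ [] := by rw [hPree]; simp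
            obtain ⟨y, hy⟩ := ke7_getLast_some hPrene
            refine ⟨y, hy, ?_⟩
            have := J1 y hy e₁ hheadCS
            exact this.mpr h1M
private def ke7Step (G : SimpleGraph V) (M : Finset (Sym2 V)) (p : V → V) (x y : V) : Prop :=
  ∃ z, G.Adj x z ∧ s(x, z) ∉ M ∧ y = p z

private def ke7Imp (G : SimpleGraph V) (M : Finset (Sym2 V)) (p : V → V) : V → V → Prop :=
  Relation.ReflTransGen (ke7Step G M p)

section ke7partner

variable {G : SimpleGraph V} {M : Finset (Sym2 V)} {p : V → V}

private lemma ke7_partner_exists (hM : IsMatching' G M) (hPM : ∀ x : V, MatchedBy M x) :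
    ∃ p : V → V, (∀ v, s(v, p v) ∈ M) ∧ (∀ e ∈ M, ∀ v ∈ e, e = s(v, p v)) := by
  have h1 : ∀ v : V, ∃ w, s(v, w) ∈ M := by
    intro v
    obtain ⟨e, heM, hve⟩ := hPM v
    obtain ⟨w, rfl⟩ := Sym2.mem_iff_exists.mp hve
    exact ⟨w, heM⟩
  choose p hp using h1
  refine ⟨p, hp, ?_⟩
  intro e heM v hve
  by_contra hne
  exact hM.2 e heM _ (hp v) hne v ⟨hve, Sym2.mem_mk_left _ _⟩

private lemma ke7_adj (hM : IsMatching' G M) (hp2 : ∀ v, s(v, p v) ∈ M) (v : V) :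
    G.Adj v (p v) :=
  (SimpleGraph.mem_edgeSet G).mp (hM.1 (hp2 v))

private lemma ke7_pne (hM : IsMatching' G M) (hp2 : ∀ v, s(v, p v) ∈ M) (v : V) :
    p v ≠ v :=
  fun h => G.irrefl (h ▸ ke7_adj hM hp2 v)

private lemma ke7_pp (hM : IsMatching' G M) (hp2 : ∀ v, s(v, p v) ∈ M)
    (hp3 : ∀ e ∈ M, ∀ v ∈ e, e = s(v, p v)) (v : V) : p (p v) = v := by
  have h := hp3 _ (hp2 v) (p v) (Sym2.mem_mk_right _ _)
  rcases Sym2.eq_iff.mp h with ⟨h1, h2⟩ | ⟨h1, h2⟩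
  · exact absurd h1.symm (ke7_pne hM hp2 v)
  · exact h2.symm ▸ h1.symm

private lemma ke7_step_symm (hM : IsMatching' G M) (hp2 : ∀ v, s(v, p v) ∈ M)
    (hp3 : ∀ e ∈ M, ∀ v ∈ e, e = s(v, p v)) {x y : V} (h : ke7Step G M p x y) :
    ke7Step G M p (p y) (p x) := by
  obtain ⟨z, hadj, hnm, rfl⟩ := h
  refine ⟨x, ?_, ?_, rfl⟩
  · rw [ke7_pp hM hp2 hp3 z]; exact hadj.symm
  · rw [ke7_pp hM hp2 hp3 z, Sym2.eq_swap]; exact hnm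

private lemma ke7_imp_rev (hM : IsMatching' G M) (hp2 : ∀ v, s(v, p v) ∈ M)
    (hp3 : ∀ e ∈ M, ∀ v ∈ e, e = s(v, p v)) {x y : V} (h : ke7Imp G M p x y) :
    ke7Imp G M p (p y) (p x) := by
  induction h with
  | refl => exact Relation.ReflTransGen.refl
  | tail _ hbc ih => exact Relation.ReflTransGen.head (ke7_step_symm hM hp2 hp3 hbc) ih

private lemma ke7_imp_trans {x y z : V} (h1 : ke7Imp G M p x y) (h2 : ke7Imp G M p y z) :
    ke7Imp G M p x z := Relation.ReflTransGen.trans h1 h2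

private lemma ke7_imp_to_walk (hM : IsMatching' G M) (hp2 : ∀ v, s(v, p v) ∈ M)
    {x y : V} (h : ke7Imp G M p x y) :
    ∃ W : G.Walk x y, IsAltWalk M W ∧
      (W.Nil ∨ (StartsUnmatched M W ∧ EndsMatched M W)) := by
  induction h with
  | refl => exact ⟨Walk.nil, List.isChain_nil, Or.inl Walk.Nil.nil⟩
  | @tail b c hxb hbc ih =>
    obtain ⟨W, hWalt, hWcase⟩ := ih
    obtain ⟨z, hadj, hnm, rfl⟩ := hbc
    have hadjz : G.Adj z (p z) := ke7_adj hM hp2 z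
    have hWedges : W.Nil → W.edges = [] := by
      intro hnil
      rw [← List.length_eq_zero_iff, Walk.length_edges]
      exact Walk.nil_iff_length_eq.mp hnil
    refine ⟨W.append (Walk.cons hadj (Walk.cons hadjz Walk.nil)), ?_, Or.inr ⟨?_, ?_⟩⟩
    · rw [IsAltWalk, Walk.edges_append, List.Chain', List.isChain_append]
      refine ⟨hWalt, ?_, ?_⟩
      · simp only [Walk.edges_cons, Walk.edges_nil]
        rw [List.isChain_cons_cons]
        exact ⟨iff_of_false hnm (not_not_intro (hp2 z)), List.isChain_singleton _⟩
      · intro a ha e' he'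
        simp only [Walk.edges_cons, Walk.edges_nil, List.head?_cons,
          Option.mem_def, Option.some.injEq] at he'
        subst he'
        rcases hWcase with hnil | ⟨_, ⟨et, hget, hetM⟩⟩
        · rw [hWedges hnil] at ha
          simp at ha
        · rw [Option.mem_def, hget, Option.some.injEq] at ha
          subst ha
          exact iff_of_true hetM hnm
    · rcases hWcase with hnil | ⟨⟨es, hhes, hesM⟩, _⟩
      · refine ⟨s(b, z), ?_, hnm⟩
        rw [Walk.edges_append, hWedges hnil]
        simp
      · refine ⟨es, ?_, hesM⟩
        rw [Walk.edges_append, List.head?_append, hhes, Option.some_or]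
    · refine ⟨s(z, p z), ?_, hp2 z⟩
      rw [Walk.edges_append, List.getLast?_append]
      simp

private lemma ke7_ear_of_imp (hM : IsMatching' G M) (hp2 : ∀ v, s(v, p v) ∈ M)
    (hp3 : ∀ e ∈ M, ∀ v ∈ e, e = s(v, p v)) {x : V} (h : ke7Imp G M p x (p x)) :
    ∃ O : G.Walk x x, Odd O.length ∧ IsAltWalk M O ∧
      StartsUnmatched M O ∧ EndsUnmatched M O := by
  obtain ⟨W, hWalt, hWcase⟩ := ke7_imp_to_walk hM hp2 h
  have hWnotnil : ¬W.Nil := by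
    intro hnil
    have h0 : W.length = 0 := Walk.nil_iff_length_eq.mp hnil
    exact ke7_pne hM hp2 x (Walk.eq_of_length_eq_zero h0).symm
  rcases hWcase with hnil | ⟨⟨es, hhes, hesM⟩, ⟨et, hget, hetM⟩⟩
  · exact absurd hnil hWnotnil
  have hWrevnotnil : ¬W.reverse.Nil := by
    rw [Walk.nil_iff_length_eq, Walk.length_reverse]
    rw [Walk.nil_iff_length_eq] at hWnotnil
    exact hWnotnil
  obtain ⟨u', hadj, Q, hPrev⟩ := SimpleGraph.Walk.not_nil_iff.mp hWrevnotnil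
  -- first edge of the reversed walk is the last edge of W, which is matched
  have hrevhead : W.reverse.edges.head? = some et := by
    rw [Walk.edges_reverse, List.head?_reverse]
    exact hget
  have hfe : s(p x, u') = et := by
    rw [hPrev, Walk.edges_cons, List.head?_cons] at hrevhead
    exact Option.some.inj hrevhead
  have hu' : u' = x := by
    have h3 := hp3 et (hfe ▸ hetM) (p x) (hfe ▸ Sym2.mem_mk_left _ _)
    rw [← hfe, ke7_pp hM hp2 hp3 x] at h3
    rcases Sym2.eq_iff.mp h3 with ⟨_, h2⟩ | ⟨h1, _⟩
    · exact h2
    · exact absurd h1 (ke7_pne hM hp2 x)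
  subst hu'
  -- W.edges = Q.edges.reverse ++ [et]
  have hWE : W.edges = Q.reverse.edges ++ [et] := by
    have h1 : W.reverse.edges = et :: Q.edges := by
      rw [hPrev, Walk.edges_cons, hfe]
    have h2 : W.edges.reverse = et :: Q.edges := by rw [← Walk.edges_reverse]; exact h1
    have h3 := congrArg List.reverse h2
    rw [List.reverse_reverse] at h3
    rw [h3, Walk.edges_reverse]
    simp
  set O := Q.reverse with hO
  have haltO : IsAltWalk M O := by
    have := hWalt
    rw [IsAltWalk, hWE, List.Chain', List.isChain_append] at this
    exact this.1
  have hOne : O.edges ≠ [] := by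
    intro h0
    -- then W has exactly one edge, but W has even length
    have hlen : W.edges.length = 1 := by rw [hWE, h0]; simp
    have hstat := ke7_alt_head_last M W.edges hWalt es hhes et hget
    rw [hlen] at hstat
    have : Odd 1 := by decide
    exact hesM ((hstat.mpr this).mpr hetM)
  refine ⟨O, ?_, haltO, ?_, ?_⟩
  · -- length odd since W is even
    have hstat := ke7_alt_head_last M W.edges hWalt es hhes et hget
    have heven : ¬Odd W.edges.length := fun ho => hesM ((hstat.mpr ho).mpr hetM)
    have hlen : W.edges.length = O.edges.length + 1 := by rw [hWE]; simp
    rw [← Walk.length_edges]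
    rw [Nat.odd_iff] at heven ⊢
    omega
  · obtain ⟨a, ha⟩ := ke7_head_some hOne
    rw [hWE, List.head?_append, ha, Option.some_or] at hhes
    exact ⟨es, by rw [ha, Option.some.inj hhes], hesM⟩
  · obtain ⟨a, ha⟩ := ke7_getLast_some hOne
    refine ⟨a, ha, ?_⟩
    have := hWalt
    rw [IsAltWalk, hWE, List.Chain', List.isChain_append] at this
    have hJ := this.2.2 a ha et (by simp)
    exact fun haM => (hJ.mp haM) hetM

end ke7partner
section ke7assemble

variable {G : SimpleGraph V} {M : Finset (Sym2 V)} {p : V → V}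

private lemma ke7_chain_rev {l : List (Sym2 V)}
    (h : l.Chain' (fun e f => e ∈ M ↔ f ∉ M)) :
    l.reverse.Chain' (fun e f => e ∈ M ↔ f ∉ M) := by
  rw [List.Chain', List.isChain_reverse]
  exact h.imp (fun a b hab => by tauto)

private lemma ke7_nil_edges {a b : V} {W : G.Walk a b} (h : W.Nil) : W.edges = [] := by
  rw [← List.length_eq_zero_iff, Walk.length_edges]
  exact Walk.nil_iff_length_eq.mp h

private lemma ke7_jposy_of_bad (hM : IsMatching' G M) (hp2 : ∀ v, s(v, p v) ∈ M)
    (hp3 : ∀ e ∈ M, ∀ v ∈ e, e = s(v, p v)) {x : V}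
    (h1 : ke7Imp G M p x (p x)) (h2 : ke7Imp G M p (p x) x) :
    ∃ (b₁ b₂ : V) (c₁ : G.Walk b₁ b₁) (c₂ : G.Walk b₂ b₂) (w : G.Walk b₁ b₂),
      IsJposy G M c₁ c₂ w := by
  obtain ⟨O₁, ho1, ha1, hs1, he1⟩ := ke7_ear_of_imp hM hp2 hp3 h1
  have h2' : ke7Imp G M p (p x) (p (p x)) := by rw [ke7_pp hM hp2 hp3 x]; exact h2
  obtain ⟨O₂, ho2, ha2, hs2, he2⟩ := ke7_ear_of_imp hM hp2 hp3 h2'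
  obtain ⟨b₁, c₁, A₁, hb1, hA1alt, hA1c⟩ := ke7_extract hM O₁.length O₁ le_rfl ho1 ha1 hs1 he1
  obtain ⟨b₂, c₂, A₂, hb2, hA2alt, hA2c⟩ := ke7_extract hM O₂.length O₂ le_rfl ho2 ha2 hs2 he2
  have hxpx : s(x, p x) ∈ M := hp2 x
  set w : G.Walk b₁ b₂ := A₁.reverse.append (Walk.cons (ke7_adj hM hp2 x) A₂) with hw
  have hwE : w.edges = A₁.edges.reverse ++ (s(x, p x) :: A₂.edges) := by
    rw [hw, Walk.edges_append, Walk.edges_reverse, Walk.edges_cons]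
  have F1 : A₁.edges.reverse.Chain' (fun e f => e ∈ M ↔ f ∉ M) := ke7_chain_rev hA1alt
  have F2 : ∀ a ∈ A₁.edges.reverse.getLast?, ∀ y ∈ (s(x, p x) :: A₂.edges).head?,
      (a ∈ M ↔ y ∉ M) := by
    intro a ha y hy
    simp only [List.head?_cons, Option.mem_def, Option.some.injEq] at hy
    subst hy
    rw [List.getLast?_reverse] at ha
    rcases hA1c with hnil | ⟨⟨es, hes, hesM⟩, _⟩
    · rw [ke7_nil_edges hnil] at ha; simp at ha
    · rw [Option.mem_def, hes, Option.some.injEq] at ha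
      subst ha
      exact iff_of_false hesM (not_not_intro hxpx)
  have F3 : (s(x, p x) :: A₂.edges).Chain' (fun e f => e ∈ M ↔ f ∉ M) := by
    rw [List.Chain', List.isChain_cons]
    refine ⟨?_, hA2alt⟩
    intro y hy
    rcases hA2c with hnil | ⟨⟨es, hes, hesM⟩, _⟩
    · rw [ke7_nil_edges hnil] at hy; simp at hy
    · rw [Option.mem_def, hes, Option.some.injEq] at hy
      subst hy
      exact iff_of_true hxpx hesM
  have halt_w : IsAltWalk M w := by
    rw [IsAltWalk, hwE, List.Chain', List.isChain_append]
    exact ⟨F1, F3, F2⟩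
  have hsm_w : StartsMatched M w := by
    rcases hA1c with hnil | ⟨_, ⟨et, het, hetM⟩⟩
    · refine ⟨s(x, p x), ?_, hxpx⟩
      rw [hwE, ke7_nil_edges hnil]
      simp
    · refine ⟨et, ?_, hetM⟩
      rw [hwE, List.head?_append, List.head?_reverse, het, Option.some_or]
  have hem_w : EndsMatched M w := by
    rcases hA2c with hnil | ⟨_, ⟨et, het, hetM⟩⟩
    · refine ⟨s(x, p x), ?_, hxpx⟩
      rw [hwE, ke7_nil_edges hnil, List.getLast?_append]
      simp
    · refine ⟨et, ?_, hetM⟩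
      rw [hwE, List.getLast?_append]
      have : (s(x, p x) :: A₂.edges).getLast? = some et := by
        rcases hAe : A₂.edges with _ | ⟨a2, t2⟩
        · rw [hAe] at het; simp at het
        · rw [hAe] at het
          rw [List.getLast?_cons_cons]
          exact het
      rw [this, Option.some_or]
  have hodd_w : Odd w.length := by
    obtain ⟨eh, heh, hehM⟩ := hsm_w
    obtain ⟨el, hel, helM⟩ := hem_w
    have hstat := ke7_alt_head_last M w.edges halt_w eh heh el hel
    rw [← Walk.length_edges]
    exact hstat.mp (iff_of_true hehM helM)
  exact ⟨b₁, b₂, c₁, c₂, w, hb1, hb2, hodd_w, halt_w, hsm_w, hem_w⟩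

end ke7assemble
section ke7closure

variable {G : SimpleGraph V} {M : Finset (Sym2 V)} {p : V → V}

private lemma ke7_closure [Fintype V] (hM : IsMatching' G M) (hp2 : ∀ v, s(v, p v) ∈ M)
    (hp3 : ∀ e ∈ M, ∀ v ∈ e, e = s(v, p v))
    (hcon : ∀ x : V, ¬(ke7Imp G M p x (p x) ∧ ke7Imp G M p (p x) x)) :
    ∃ T : Finset V, (∀ a ∈ T, ∀ y, ke7Imp G M p a y → y ∈ T) ∧
      (∀ a ∈ T, p a ∉ T) ∧ (∀ x : V, x ∈ T ∨ p x ∈ T) := by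
  classical
  suffices H : ∀ (n : ℕ) (A : Finset V), (Finset.univ \ A).card ≤ n →
      (∀ a ∈ A, ∀ y, ke7Imp G M p a y → y ∈ A) → (∀ a ∈ A, p a ∉ A) →
      ∃ T : Finset V, (∀ a ∈ T, ∀ y, ke7Imp G M p a y → y ∈ T) ∧
        (∀ a ∈ T, p a ∉ T) ∧ (∀ x : V, x ∈ T ∨ p x ∈ T) by
    exact H (Finset.univ \ ∅).card ∅ le_rfl (by simp) (by simp)
  intro n
  induction n with
  | zero =>
    intro A hcard hclosed hconsist
    refine ⟨A, hclosed, hconsist, ?_⟩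
    intro x
    left
    by_contra hx
    have hmem : x ∈ Finset.univ \ A := Finset.mem_sdiff.mpr ⟨Finset.mem_univ x, hx⟩
    have := Finset.card_pos.mpr ⟨x, hmem⟩
    omega
  | succ n IH =>
    intro A hcard hclosed hconsist
    by_cases htot : ∀ x : V, x ∈ A ∨ p x ∈ A
    · exact ⟨A, hclosed, hconsist, htot⟩
    · push_neg at htot
      obtain ⟨x, hx1, hx2⟩ := htot
      set ℓ := if ke7Imp G M p x (p x) then p x else x with hℓ
      have hkey : ¬ ke7Imp G M p ℓ (p ℓ) := by
        by_cases hi : ke7Imp G M p x (p x)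
        · rw [hℓ, if_pos hi]
          intro hbad
          rw [ke7_pp hM hp2 hp3 x] at hbad
          exact hcon x ⟨hi, hbad⟩
        · rw [hℓ, if_neg hi]; exact hi
      have hℓA : ℓ ∉ A ∧ p ℓ ∉ A := by
        by_cases hi : ke7Imp G M p x (p x)
        · rw [hℓ, if_pos hi, ke7_pp hM hp2 hp3 x]
          exact ⟨hx2, hx1⟩
        · rw [hℓ, if_neg hi]
          exact ⟨hx1, hx2⟩
      set A' := A ∪ Finset.univ.filter (fun y => ke7Imp G M p ℓ y) with hA'
      have hmemA' : ∀ y, y ∈ A' ↔ (y ∈ A ∨ ke7Imp G M p ℓ y) := by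
        intro y
        rw [hA', Finset.mem_union, Finset.mem_filter]
        simp
      have hsub : A ⊆ A' := Finset.subset_union_left
      have hℓA' : ℓ ∈ A' := (hmemA' ℓ).mpr (Or.inr Relation.ReflTransGen.refl)
      have hclosed' : ∀ a ∈ A', ∀ y, ke7Imp G M p a y → y ∈ A' := by
        intro a ha y hy
        rcases (hmemA' a).mp ha with ha' | ha'
        · exact (hmemA' y).mpr (Or.inl (hclosed a ha' y hy))
        · exact (hmemA' y).mpr (Or.inr (ke7_imp_trans ha' hy))
      have hconsist' : ∀ a ∈ A', p a ∉ A' := by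
        intro a ha hpa
        rcases (hmemA' a).mp ha with ha' | ha' <;> rcases (hmemA' (p a)).mp hpa with hpa' | hpa'
        · exact hconsist a ha' hpa'
        · have h1 := ke7_imp_rev hM hp2 hp3 hpa'
          rw [ke7_pp hM hp2 hp3 a] at h1
          exact hℓA.2 (hclosed a ha' (p ℓ) h1)
        · have h1 := ke7_imp_rev hM hp2 hp3 ha'
          exact hℓA.2 (hclosed (p a) hpa' (p ℓ) h1)
        · have h1 := ke7_imp_rev hM hp2 hp3 hpa'
          rw [ke7_pp hM hp2 hp3 a] at h1
          exact hkey (ke7_imp_trans ha' h1)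
      have hcard' : (Finset.univ \ A').card ≤ n := by
        have hss : Finset.univ \ A' ⊂ Finset.univ \ A := by
          refine Finset.ssubset_iff_of_subset (Finset.sdiff_subset_sdiff (le_refl _) hsub) |>.mpr ?_
          exact ⟨ℓ, Finset.mem_sdiff.mpr ⟨Finset.mem_univ _, hℓA.1⟩,
            fun hmem => (Finset.mem_sdiff.mp hmem).2 hℓA'⟩
        have := Finset.card_lt_card hss
        omega
      exact IH A' hcard' hclosed' hconsist'

private lemma ke7_matching_card_le [Fintype V] {m : Finset (Sym2 V)}
    (hm : IsMatching' G m) : 2 * m.card ≤ Fintype.card V := by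
  classical
  have hex : ∀ e : Sym2 V, ∃ q : V × V, e = s(q.1, q.2) := by
    intro e
    induction e with
    | _ a b => exact ⟨(a, b), rfl⟩
  choose q hq using hex
  have hne : ∀ e ∈ m, (q e).1 ≠ (q e).2 := by
    intro e he heq
    have h1 : e ∈ G.edgeSet := hm.1 he
    have h2 : s((q e).1, (q e).2) ∈ G.edgeSet := by rwa [← hq e]
    rw [heq] at h2
    exact G.irrefl ((SimpleGraph.mem_edgeSet G).mp h2)
  have hmem1 : ∀ e : Sym2 V, (q e).1 ∈ e := by
    intro e
    have := Sym2.mem_mk_left (q e).1 (q e).2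
    rwa [← hq e] at this
  have hmem2 : ∀ e : Sym2 V, (q e).2 ∈ e := by
    intro e
    have := Sym2.mem_mk_right (q e).1 (q e).2
    rwa [← hq e] at this
  have hinj1 : Set.InjOn (fun e => (q e).1) m := by
    intro e he e' he' heq
    by_contra hne'
    refine hm.2 e he e' he' hne' (q e).1 ⟨hmem1 e, ?_⟩
    rw [show (q e).1 = (q e').1 from heq]
    exact hmem1 e'
  have hinj2 : Set.InjOn (fun e => (q e).2) m := by
    intro e he e' he' heq
    by_contra hne'
    refine hm.2 e he e' he' hne' (q e).2 ⟨hmem2 e, ?_⟩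
    rw [show (q e).2 = (q e').2 from heq]
    exact hmem2 e'
  have hdisj : Disjoint (m.image (fun e => (q e).1)) (m.image (fun e => (q e).2)) := by
    rw [Finset.disjoint_left]
    intro v hv1 hv2
    obtain ⟨e, he, hqe⟩ := Finset.mem_image.mp hv1
    obtain ⟨e', he', hqe'⟩ := Finset.mem_image.mp hv2
    by_cases hee : e = e'
    · subst hee
      exact hne e he (hqe.trans hqe'.symm)
    · exact hm.2 e he e' he' hee v ⟨hqe ▸ hmem1 e, hqe' ▸ hmem2 e'⟩
  have hcard1 : (m.image (fun e => (q e).1)).card = m.card := Finset.card_image_of_injOn hinj1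
  have hcard2 : (m.image (fun e => (q e).2)).card = m.card := Finset.card_image_of_injOn hinj2
  have := Finset.card_union_of_disjoint hdisj
  have hle := Finset.card_le_univ ((m.image (fun e => (q e).1)) ∪ (m.image (fun e => (q e).2)))
  rw [this, hcard1, hcard2] at hle
  omega

private lemma ke7_perfect_card [Fintype V] (hM : IsMatching' G M)
    (hp2 : ∀ v, s(v, p v) ∈ M) (hp3 : ∀ e ∈ M, ∀ v ∈ e, e = s(v, p v)) :
    Fintype.card V = 2 * M.card := by
  classical
  have hfib := Finset.card_eq_sum_card_fiberwise
    (f := fun v => s(v, p v)) (s := Finset.univ) (t := M) (fun v _ => hp2 v)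
  rw [Finset.card_univ] at hfib
  rw [hfib]
  rw [Finset.sum_congr rfl (g := fun _ => 2) ?_, Finset.sum_const, smul_eq_mul, mul_comm]
  intro e he
  induction e with
  | _ a b =>
    have hab : a ≠ b := by
      intro h
      have := hM.1 he
      rw [h] at this
      exact G.irrefl ((SimpleGraph.mem_edgeSet G).mp this)
    have hset : Finset.univ.filter (fun v => s(v, p v) = s(a, b)) = {a, b} := by
      ext v
      simp only [Finset.mem_filter, Finset.mem_univ, true_and, Finset.mem_insert,
        Finset.mem_singleton]
      constructor
      · intro hv
        have : v ∈ s(a, b) := by rw [← hv]; exact Sym2.mem_mk_left _ _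
        exact Sym2.mem_iff.mp this
      · rintro (rfl | rfl)
        · exact (hp3 _ he v (Sym2.mem_mk_left _ _)).symm
        · exact (hp3 _ he v (Sym2.mem_mk_right _ _)).symm
    rw [hset, Finset.card_insert_of_notMem (by simpa using hab), Finset.card_singleton]

private lemma ke7_indep_matching_bound [Fintype V] {s : Finset V} {m : Finset (Sym2 V)}
    (hs : ∀ u ∈ s, ∀ w ∈ s, ¬G.Adj u w) (hm : IsMatching' G m) :
    s.card + m.card ≤ Fintype.card V := by
  classical
  have hex : ∀ e ∈ m, ∃ v, v ∈ e ∧ v ∉ s := by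
    intro e he
    have hedge : e ∈ G.edgeSet := hm.1 he
    induction e with
    | _ a b =>
      have hadj : G.Adj a b := (SimpleGraph.mem_edgeSet G).mp hedge
      by_cases has : a ∈ s
      · by_cases hbs : b ∈ s
        · exact absurd hadj (hs a has b hbs)
        · exact ⟨b, Sym2.mem_mk_right _ _, hbs⟩
      · exact ⟨a, Sym2.mem_mk_left _ _, has⟩
  by_cases hm0 : m = ∅
  · subst hm0
    simpa using Finset.card_le_univ s
  obtain ⟨e₀, he₀⟩ := Finset.nonempty_iff_ne_empty.mpr hm0
  obtain ⟨v₀, _, _⟩ := hex e₀ he₀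
  haveI : Nonempty V := ⟨v₀⟩
  set g : Sym2 V → V := fun e => if h : ∃ v, v ∈ e ∧ v ∉ s then h.choose else Classical.arbitrary V
    with hg
  have hgmem : ∀ e ∈ m, g e ∈ e ∧ g e ∉ s := by
    intro e he
    have h := hex e he
    rw [hg]
    simp only [dif_pos h]
    exact h.choose_spec
  have hcard : m.card ≤ (Finset.univ \ s).card := by
    apply Finset.card_le_card_of_injOn g
    · intro e he
      exact Finset.mem_sdiff.mpr ⟨Finset.mem_univ _, (hgmem e he).2⟩
    · intro e he e' he' heq
      by_contra hne
      exact hm.2 e he e' he' hne (g e) ⟨(hgmem e he).1, heq ▸ (hgmem e' he').1⟩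
  have h1 := Finset.card_sdiff_of_subset (Finset.subset_univ s)
  rw [Finset.card_univ] at h1
  have h2 := Finset.card_le_univ s
  omega

end ke7closure
section ke7main

variable {G : SimpleGraph V} {M : Finset (Sym2 V)} {p : V → V}

private lemma ke7_head_mem {α : Type*} {l : List α} {e : α} (h : l.head? = some e) : e ∈ l := by
  cases l with
  | nil => simp at h
  | cons a t =>
    rw [List.head?_cons] at h
    exact (Option.some.inj h) ▸ List.mem_cons_self

private lemma ke7_prop (hM : IsMatching' G M) (hp2 : ∀ v, s(v, p v) ∈ M)
    (hp3 : ∀ e ∈ M, ∀ v ∈ e, e = s(v, p v))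
    {S : Finset V} (hind : ∀ u ∈ S, ∀ w ∈ S, ¬G.Adj u w)
    (htrans : ∀ v, v ∉ S → p v ∈ S) :
    ∀ {a b : V} (W : G.Walk a b), IsAltWalk M W →
      ((a ∉ S ∧ StartsMatched M W) → ((Odd W.length → b ∈ S) ∧ (Even W.length → b ∉ S))) ∧
      ((a ∈ S ∧ (W.Nil ∨ StartsUnmatched M W)) →
        ((Odd W.length → b ∉ S) ∧ (Even W.length → b ∈ S)))
  | _, _, Walk.nil => by
      intro _
      constructor
      · rintro ⟨_, e, he, _⟩
        simp [Walk.edges_nil] at he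
      · rintro ⟨ha, _⟩
        refine ⟨fun ho => ?_, fun _ => ha⟩
        rw [Walk.length_nil, Nat.odd_iff] at ho
        omega
  | _, _, Walk.cons h q => by
      rename_i a b c
      intro halt
      have hchain := List.isChain_cons.mp (by rwa [IsAltWalk, Walk.edges_cons] at halt)
      have IH := ke7_prop hM hp2 hp3 hind htrans q hchain.2
      constructor
      · rintro ⟨haS, e, he, heM⟩
        rw [Walk.edges_cons, List.head?_cons] at he
        have hsac : s(a, c) ∈ M := by rw [Option.some.inj he]; exact heM
        have hcpa : c = p a := by
          have h3 := hp3 _ hsac a (Sym2.mem_mk_left _ _)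
          rcases Sym2.eq_iff.mp h3 with ⟨_, h2⟩ | ⟨h1, _⟩
          · exact h2
          · exact absurd h1.symm (ke7_pne hM hp2 a)
        have hcS : c ∈ S := by rw [hcpa]; exact htrans a haS
        have hqcase : q.Nil ∨ StartsUnmatched M q := by
          rcases hqe : q.edges with _ | ⟨f, t⟩
          · left
            rw [Walk.nil_iff_length_eq, ← Walk.length_edges, hqe]
            rfl
          · right
            refine ⟨f, by rw [hqe, List.head?_cons], ?_⟩
            have hr := hchain.1 f (by rw [hqe]; rfl)
            exact hr.mp hsac
        have hconc := IH.2 ⟨hcS, hqcase⟩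
        rw [Walk.length_cons]
        constructor
        · intro ho
          rw [Nat.odd_add_one, Nat.not_odd_iff_even] at ho
          exact hconc.2 ho
        · intro hev
          rw [Nat.even_add_one, Nat.not_even_iff_odd] at hev
          exact hconc.1 hev
      · rintro ⟨haS, hcase⟩
        have hsu : StartsUnmatched M (Walk.cons h q) := by
          rcases hcase with hnil | hsu
          · exact absurd hnil Walk.not_nil_cons
          · exact hsu
        obtain ⟨e, he, heM⟩ := hsu
        rw [Walk.edges_cons, List.head?_cons] at he
        have hsac : s(a, c) ∉ M := by rw [Option.some.inj he]; exact heM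
        have hcS : c ∉ S := fun hc => hind a haS c hc h
        rcases hqe : q.edges with _ | ⟨f, t⟩
        · have hq0 : q.length = 0 := by rw [← Walk.length_edges, hqe]; rfl
          have hcb : c = b := Walk.eq_of_length_eq_zero hq0
          rw [Walk.length_cons, hq0]
          refine ⟨fun _ => hcb ▸ hcS, fun hev => ?_⟩
          rw [Nat.even_iff] at hev
          omega
        · have hsm : StartsMatched M q := by
            refine ⟨f, by rw [hqe, List.head?_cons], ?_⟩
            have hr := hchain.1 f (by rw [hqe]; rfl)
            by_contra hf
            exact hsac (hr.mpr hf)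
          have hconc := IH.1 ⟨hcS, hsm⟩
          rw [Walk.length_cons]
          constructor
          · intro ho
            rw [Nat.odd_add_one, Nat.not_odd_iff_even] at ho
            exact hconc.2 ho
          · intro hev
            rw [Nat.even_add_one, Nat.not_even_iff_odd] at hev
            exact hconc.1 hev

private lemma ke7_blossom_base (hM : IsMatching' G M) (hp2 : ∀ v, s(v, p v) ∈ M)
    (hp3 : ∀ e ∈ M, ∀ v ∈ e, e = s(v, p v))
    {S : Finset V} (hind : ∀ u ∈ S, ∀ w ∈ S, ¬G.Adj u w)
    (htrans : ∀ v, v ∉ S → p v ∈ S) {b : V} {c : G.Walk b b}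
    (hbl : IsBlossom G M c) : b ∉ S := by
  intro hbS
  obtain ⟨hcyc, hodd, halt, hcount, havoid⟩ := hbl
  have hne : c.edges ≠ [] := ke7_edges_ne_nil_of_pos (by rw [Nat.odd_iff] at hodd; omega)
  obtain ⟨e0, he0⟩ := ke7_head_some hne
  have hb0 : b ∈ e0 := ke7_start_mem_head_edge c e0 he0
  have hmem : e0 ∈ c.edges := ke7_head_mem he0
  have he0M : e0 ∉ M := fun hM0 => havoid e0 hmem hM0 hb0
  have hprop := (ke7_prop hM hp2 hp3 hind htrans c halt).2 ⟨hbS, Or.inr ⟨e0, he0, he0M⟩⟩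
  exact hprop.1 hodd hbS

private lemma ke7_no_jposy (hM : IsMatching' G M) (hp2 : ∀ v, s(v, p v) ∈ M)
    (hp3 : ∀ e ∈ M, ∀ v ∈ e, e = s(v, p v))
    {S : Finset V} (hind : ∀ u ∈ S, ∀ w ∈ S, ¬G.Adj u w)
    (htrans : ∀ v, v ∉ S → p v ∈ S) {b₁ b₂ : V} {c₁ : G.Walk b₁ b₁}
    {c₂ : G.Walk b₂ b₂} {w : G.Walk b₁ b₂} (hj : IsJposy G M c₁ c₂ w) : False := by
  obtain ⟨hb1, hb2, hodd, halt, hsm, hem⟩ := hj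
  have h1 := ke7_blossom_base hM hp2 hp3 hind htrans hb1
  have h2 := ke7_blossom_base hM hp2 hp3 hind htrans hb2
  have hp := (ke7_prop hM hp2 hp3 hind htrans w halt).1 ⟨h1, hsm⟩
  exact h2 (hp.1 hodd)

private lemma ke7_transversal_of_card [Fintype V] (hM : IsMatching' G M)
    (hp2 : ∀ v, s(v, p v) ∈ M) (hp3 : ∀ e ∈ M, ∀ v ∈ e, e = s(v, p v))
    {S : Finset V} (hind : ∀ u ∈ S, ∀ w ∈ S, ¬G.Adj u w)
    (hcard : S.card = M.card) : ∀ v, v ∉ S → p v ∈ S := by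
  classical
  have hfib := Finset.card_eq_sum_card_fiberwise
    (f := fun v => s(v, p v)) (s := S) (t := M) (fun v _ => hp2 v)
  have hle : ∀ e ∈ M, (S.filter (fun v => s(v, p v) = e)).card ≤ 1 := by
    intro e he
    rw [Finset.card_le_one]
    intro u hu w hw
    rw [Finset.mem_filter] at hu hw
    by_contra hne
    have hwe : w ∈ s(u, p u) := by
      rw [hu.2, ← hw.2]
      exact Sym2.mem_mk_left _ _
    rcases Sym2.mem_iff.mp hwe with h1 | h1
    · exact hne h1.symm
    · exact hind u hu.1 w hw.1 (h1 ▸ ke7_adj hM hp2 u)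
  have hall : ∀ e ∈ M, (S.filter (fun v => s(v, p v) = e)).card = 1 := by
    by_contra hc
    push_neg at hc
    obtain ⟨e, he, hne⟩ := hc
    have hlt : (S.filter (fun v => s(v, p v) = e)).card < 1 :=
      lt_of_le_of_ne (hle e he) hne
    have hsum : ∑ e' ∈ M, (S.filter (fun v => s(v, p v) = e')).card < ∑ _e' ∈ M, 1 :=
      Finset.sum_lt_sum (fun i hi => hle i hi) ⟨e, he, hlt⟩
    rw [Finset.sum_const, smul_eq_mul, mul_one, ← hfib] at hsum
    omega
  intro v hv
  have h1 := hall _ (hp2 v)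
  rw [Finset.card_eq_one] at h1
  obtain ⟨w, hw⟩ := h1
  have hwmem : w ∈ S.filter (fun v' => s(v', p v') = s(v, p v)) := by
    rw [hw]
    exact Finset.mem_singleton_self w
  rw [Finset.mem_filter] at hwmem
  have hwv : w ∈ s(v, p v) := by
    rw [← hwmem.2]
    exact Sym2.mem_mk_left _ _
  rcases Sym2.mem_iff.mp hwv with h2 | h2
  · exact absurd (h2 ▸ hwmem.1) hv
  · exact h2 ▸ hwmem.1

private lemma ke7_indep_bdd [Fintype V] (G : SimpleGraph V) :
    BddAbove {n | ∃ s : Finset V, (∀ u ∈ s, ∀ w ∈ s, ¬ G.Adj u w) ∧ s.card = n} :=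
  ⟨Fintype.card V, fun _n ⟨s, _, hc⟩ => hc ▸ Finset.card_le_univ s⟩

private lemma ke7_indep_exists [Fintype V] (G : SimpleGraph V) :
    ∃ s : Finset V, (∀ u ∈ s, ∀ w ∈ s, ¬ G.Adj u w) ∧ s.card = _root_.indepNum G := by
  have h := Nat.sSup_mem
    (s := {n | ∃ s : Finset V, (∀ u ∈ s, ∀ w ∈ s, ¬ G.Adj u w) ∧ s.card = n})
    ⟨0, ⟨∅, by simp, by simp⟩⟩ (ke7_indep_bdd G)
  exact h

private lemma ke7_indep_le [Fintype V] (G : SimpleGraph V) {s : Finset V}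
    (hs : ∀ u ∈ s, ∀ w ∈ s, ¬ G.Adj u w) : s.card ≤ _root_.indepNum G :=
  le_csSup (ke7_indep_bdd G) ⟨s, hs, rfl⟩

private lemma ke7_match_bdd [Fintype V] (G : SimpleGraph V) :
    BddAbove {n | ∃ M : Finset (Sym2 V), IsMatching' G M ∧ M.card = n} :=
  ⟨Fintype.card (Sym2 V), fun _n ⟨m, _, hc⟩ => hc ▸ Finset.card_le_univ m⟩

private lemma ke7_match_exists [Fintype V] (G : SimpleGraph V) :
    ∃ m : Finset (Sym2 V), IsMatching' G m ∧ m.card = matchNum G := by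
  have h := Nat.sSup_mem
    (s := {n | ∃ M : Finset (Sym2 V), IsMatching' G M ∧ M.card = n})
    ⟨0, ⟨∅, ⟨by simp, by simp⟩, by simp⟩⟩ (ke7_match_bdd G)
  exact h

private lemma ke7_match_le [Fintype V] (G : SimpleGraph V) {m : Finset (Sym2 V)}
    (hm : IsMatching' G m) : m.card ≤ matchNum G :=
  le_csSup (ke7_match_bdd G) ⟨m, hm, rfl⟩

end ke7main

/-- A graph with a perfect matching is König–Egerváry iff it has no
`M`-Jposy relative to any perfect matching `M`. -/
theorem stmt_7 {V : Type*} [DecidableEq V] [Fintype V] (G : SimpleGraph V)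
    (hpm : ∃ M : Finset (Sym2 V), IsMatching' G M ∧ ∀ x : V, MatchedBy M x) :
    IsKE G ↔ ∀ M : Finset (Sym2 V), IsMatching' G M → (∀ x : V, MatchedBy M x) →
      ¬ ∃ (b₁ b₂ : V) (c₁ : G.Walk b₁ b₁) (c₂ : G.Walk b₂ b₂) (w : G.Walk b₁ b₂),
        IsJposy G M c₁ c₂ w := by
  obtain ⟨M₀, hM₀, hPM₀⟩ := hpm
  constructor
  · -- KE implies no Jposy
    intro hke Mx hMx hPMx hJ
    obtain ⟨b₁, b₂, c₁, c₂, w, hj⟩ := hJ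
    obtain ⟨p, hp2, hp3⟩ := ke7_partner_exists hMx hPMx
    have hcardV := ke7_perfect_card hMx hp2 hp3
    -- matchNum G = Mx.card
    obtain ⟨m', hm', hm'card⟩ := ke7_match_exists G
    have hm'le : 2 * m'.card ≤ Fintype.card V := ke7_matching_card_le hm'
    have hm2 : Mx.card ≤ matchNum G := ke7_match_le G hMx
    have hmeq : matchNum G = Mx.card := by omega
    -- get a maximum independent set
    obtain ⟨S, hSind, hScard⟩ := ke7_indep_exists G
    have hSM : S.card = Mx.card := by
      have hke' : _root_.indepNum G + matchNum G = Fintype.card V := hke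
      omega
    have htrans := ke7_transversal_of_card hMx hp2 hp3 hSind hSM
    exact ke7_no_jposy hMx hp2 hp3 hSind htrans hj
  · -- no Jposy implies KE
    intro hno
    obtain ⟨p, hp2, hp3⟩ := ke7_partner_exists hM₀ hPM₀
    have hcon : ∀ x : V, ¬(ke7Imp G M₀ p x (p x) ∧ ke7Imp G M₀ p (p x) x) := by
      rintro x ⟨h1, h2⟩
      exact hno M₀ hM₀ hPM₀ (ke7_jposy_of_bad hM₀ hp2 hp3 h1 h2)
    obtain ⟨T, hclosed, hconsist, htot⟩ := ke7_closure hM₀ hp2 hp3 hcon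
    have hTind : ∀ u ∈ T, ∀ w ∈ T, ¬G.Adj u w := by
      intro u hu w hw hadj
      by_cases hM' : s(u, w) ∈ M₀
      · have h3 := hp3 _ hM' u (Sym2.mem_mk_left _ _)
        rcases Sym2.eq_iff.mp h3 with ⟨_, h2⟩ | ⟨h1, _⟩
        · exact hconsist u hu (h2 ▸ hw)
        · exact (ke7_pne hM₀ hp2 u) h1.symm
      · have hstep : ke7Step G M₀ p u (p w) := ⟨w, hadj, hM', rfl⟩
        have hpw : p w ∈ T := hclosed u hu (p w) (Relation.ReflTransGen.single hstep)
        exact hconsist w hw hpw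
    have hTcard : Fintype.card V = 2 * T.card := by
      classical
      have himg : (T.image p).card = T.card := Finset.card_image_of_injOn (by
        intro x hx y hy hxy
        have h4 : p (p x) = p (p y) := by rw [hxy]
        rwa [ke7_pp hM₀ hp2 hp3 x, ke7_pp hM₀ hp2 hp3 y] at h4)
      have hdisj : Disjoint T (T.image p) := by
        rw [Finset.disjoint_left]
        intro v hv hv'
        obtain ⟨t, ht, rfl⟩ := Finset.mem_image.mp hv'
        exact hconsist t ht hv
      have hunion : T ∪ T.image p = Finset.univ := by
        apply Finset.eq_univ_of_forall
        intro v
        rcases htot v with hv | hv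
        · exact Finset.mem_union_left _ hv
        · exact Finset.mem_union_right _
            (Finset.mem_image.mpr ⟨p v, hv, ke7_pp hM₀ hp2 hp3 v⟩)
      have hcu := Finset.card_union_of_disjoint hdisj
      rw [hunion, Finset.card_univ, himg] at hcu
      omega
    have hcardV := ke7_perfect_card hM₀ hp2 hp3
    have hTle : T.card ≤ _root_.indepNum G := ke7_indep_le G hTind
    obtain ⟨S, hSind, hScard⟩ := ke7_indep_exists G
    obtain ⟨m', hm', hm'card⟩ := ke7_match_exists G
    have hbound := ke7_indep_matching_bound hSind hm'
    have hm2 : M₀.card ≤ matchNum G := ke7_match_le G hM₀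
    have hm'le : 2 * m'.card ≤ Fintype.card V := ke7_matching_card_le hm'
    show _root_.indepNum G + matchNum G = Fintype.card V
    omega
end

section
/- Let G be a graph, M a maximum matching of G, and H an M-Tposy of G. Then for every vertex v of H there exists a non-trivial M-alternating path in H from v to the base of one of the two blossoms of H that starts and ends with edges of M. -/
open SimpleGraph

variable {V : Type*} [DecidableEq V]

section Aux

variable {G : SimpleGraph V} {M : Finset (Sym2 V)}

private lemma alt_getElem {l : List (Sym2 V)}
    (h : l.Chain' (fun e f => e ∈ M ↔ f ∉ M)) :
    ∀ i, ∀ (hi : i < l.length) (h0 : 0 < l.length), (l[i] ∈ M ↔ ((l[0]'h0) ∈ M ↔ Even i)) := by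
  intro i
  induction i with
  | zero => intro hi h0; simp
  | succ n ih =>
    intro hi h0
    have h1 := List.isChain_iff_getElem.mp h n (by omega)
    have h2 := ih (by omega) h0
    rw [Nat.even_add_one]
    tauto

private lemma start_mem_head_edge {u v : V} {w : G.Walk u v} {e : Sym2 V}
    (he : w.edges.head? = some e) : u ∈ e := by
  cases w with
  | nil => simp at he
  | cons h w' =>
    simp only [Walk.edges_cons, List.head?_cons, Option.some.injEq] at he
    subst he; simp

private lemma end_mem_getLast_edge {u v : V} {w : G.Walk u v} {e : Sym2 V}
    (he : w.edges.getLast? = some e) : v ∈ e := by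
  apply start_mem_head_edge (w := w.reverse)
  rw [Walk.edges_reverse, List.head?_reverse]; exact he

private lemma end_mem_support_tail {u v : V} (w : G.Walk u v)
    (h : w.length ≠ 0) : v ∈ w.support.tail := by
  cases w with
  | nil => simp at h
  | cons h' w' => simpa using w'.end_mem_support

private lemma head?_append_left {α : Type*} {l₁ l₂ : List α} {a : α} (h : l₁.head? = some a) :
    (l₁ ++ l₂).head? = some a := by cases l₁ <;> simp_all

private lemma getLast?_append_right' {α : Type*} {l₁ l₂ : List α} {a : α}
    (h : l₂.getLast? = some a) : (l₁ ++ l₂).getLast? = some a := by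
  rw [← List.head?_reverse, List.reverse_append]
  rw [← List.head?_reverse] at h
  exact head?_append_left h

private lemma head?_eq_of_append {α : Type*} {l₁ l₂ l : List α} (h : l₁ ++ l₂ = l)
    (hne : l₂ ≠ []) (hlt : l₁.length < l.length) : l₂.head? = some (l[l₁.length]) := by
  subst h
  have h0 : 0 < l₂.length := List.length_pos_iff.2 hne
  rw [List.head?_eq_head hne, List.head_eq_getElem]
  congr 1
  rw [List.getElem_append_right (Nat.le_refl _)]
  congr 1
  omega

private lemma head?_eq_of_append_left {α : Type*} {l₁ l₂ l : List α} (h : l₁ ++ l₂ = l)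
    (hne : l₁ ≠ []) (hlt : 0 < l.length) : l₁.head? = some (l[0]) := by
  subst h
  have h0 : 0 < l₁.length := List.length_pos_iff.2 hne
  rw [List.head?_eq_head hne, List.head_eq_getElem]
  congr 1
  rw [List.getElem_append_left h0]

private lemma getLast?_eq_of_append_left {α : Type*} {l₁ l₂ l : List α} (h : l₁ ++ l₂ = l)
    (hne : l₁ ≠ []) (hlt : l₁.length - 1 < l.length) :
    l₁.getLast? = some (l[l₁.length - 1]) := by
  subst h
  have h0 : 0 < l₁.length := List.length_pos_iff.2 hne
  rw [List.getLast?_eq_getLast hne, List.getLast_eq_getElem]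
  congr 1
  rw [List.getElem_append_left (by omega)]

private lemma getLast?_eq_of_append_right {α : Type*} {l₁ l₂ l : List α} (h : l₁ ++ l₂ = l)
    (hne : l₂ ≠ []) (hlt : l.length - 1 < l.length) :
    l₂.getLast? = some (l[l.length - 1]) := by
  subst h
  have hne' : l₁ ++ l₂ ≠ [] := fun hl => hne ((List.append_eq_nil_iff.mp hl).2)
  have h1 : (l₁ ++ l₂).getLast? = some (l₂.getLast hne) :=
    getLast?_append_right' (List.getLast?_eq_getLast hne)
  rw [List.getLast?_eq_getLast hne'] at h1
  rw [List.getLast?_eq_getLast hne, ← Option.some.inj h1, List.getLast_eq_getElem]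

private lemma IsAltWalk.reverse {u v : V} {w : G.Walk u v}
    (h : IsAltWalk M w) : IsAltWalk M w.reverse := by
  unfold IsAltWalk at h ⊢
  rw [Walk.edges_reverse]; refine List.isChain_reverse.2 ?_
  exact List.IsChain.imp (fun a b hab => by tauto) h

private lemma isPath_append' {u v w : V} {p : G.Walk u v} {q : G.Walk v w}
    (hp : p.IsPath) (hq : q.IsPath) (hd : ∀ y ∈ p.support, y ∈ q.support → y = v) :
    (p.append q).IsPath := by
  rw [Walk.isPath_def, Walk.support_append]
  refine List.Nodup.append hp.support_nodup
    (hq.support_nodup.sublist (List.tail_sublist _)) ?_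
  intro a hap haq
  have hav := hd a hap (List.mem_of_mem_tail haq)
  subst hav
  have hnd := hq.support_nodup
  rw [q.support_eq_cons, List.nodup_cons] at hnd
  exact hnd.1 haq

private lemma blossom_parity {b : V} {c : G.Walk b b}
    (hB : IsBlossom G M c) {i : ℕ} (hi : i < c.edges.length) : (c.edges[i] ∈ M ↔ Odd i) := by
  have h0 : 0 < c.edges.length := by omega
  have hne : c.edges ≠ [] := List.ne_nil_of_length_pos h0
  have hb0 : b ∈ c.edges[0] := start_mem_head_edge (w := c)
    (by rw [List.head?_eq_head hne, List.head_eq_getElem])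
  have h0M : c.edges[0]'h0 ∉ M := fun hm => (hB.2.2.2.2 _ (List.getElem_mem h0) hm) hb0
  have halt : c.edges.Chain' (fun e f => e ∈ M ↔ f ∉ M) := hB.2.2.1
  have := alt_getElem halt i hi h0
  rw [← Nat.not_even_iff_odd]
  tauto

private lemma mm_parity {u v : V} {w : G.Walk u v}
    (ha : IsAltWalk M w) (hs : StartsMatched M w) {i : ℕ} (hi : i < w.edges.length) :
    (w.edges[i] ∈ M ↔ Even i) := by
  obtain ⟨e, he, heM⟩ := hs
  have hne : w.edges ≠ [] := by intro h; rw [h] at he; simp at he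
  have h0 : 0 < w.edges.length := List.length_pos_iff.2 hne
  have h0e : w.edges[0]'h0 = e := by
    have h := he
    rw [List.head?_eq_head hne] at h
    rw [← Option.some.inj h, List.head_eq_getElem]
  have halt : w.edges.Chain' (fun e f => e ∈ M ↔ f ∉ M) := ha
  have := alt_getElem halt i hi h0
  rw [h0e] at this
  tauto

private lemma cycle_take_drop_path {b x : V} {c : G.Walk b b}
    (hc : c.IsCycle) (hx : x ∈ c.support) (hxb : x ≠ b) :
    (c.takeUntil x hx).IsPath ∧ (c.dropUntil x hx).IsPath := by
  set t := c.takeUntil x hx with htdef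
  set d := c.dropUntil x hx with hddef
  have hspec : t.append d = c := c.take_spec hx
  have hsupp : t.support ++ d.support.tail = c.support := by
    rw [← Walk.support_append, hspec]
  have hts : t.support = b :: t.support.tail := t.support_eq_cons
  have hcs : c.support = b :: c.support.tail := c.support_eq_cons
  have htail : t.support.tail ++ d.support.tail = c.support.tail := by
    have h1 : b :: (t.support.tail ++ d.support.tail) = b :: c.support.tail := by
      rw [← List.cons_append, ← hts, hsupp, ← hcs]
    simpa using congrArg List.tail h1
  have hnd : c.support.tail.Nodup := hc.support_nodup
  rw [← htail] at hnd
  obtain ⟨h1, h2, hdis⟩ := List.nodup_append.mp hnd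
  have htl : t.length ≠ 0 := fun h => hxb (Walk.eq_of_length_eq_zero h).symm
  have hdl : d.length ≠ 0 := fun h => hxb (Walk.eq_of_length_eq_zero h)
  have hxt : x ∈ t.support.tail := end_mem_support_tail t htl
  have hbd : b ∈ d.support.tail := end_mem_support_tail d hdl
  constructor
  · rw [Walk.isPath_def, hts, List.nodup_cons]
    exact ⟨fun hb => hdis _ hb _ hbd rfl, h1⟩
  · rw [Walk.isPath_def, d.support_eq_cons, List.nodup_cons]
    exact ⟨fun hxd => hdis _ hxt _ hxd rfl, h2⟩

private lemma cycle_segment {b x : V} {c : G.Walk b b}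
    (hB : IsBlossom G M c) (hx : x ∈ c.support) (hxb : x ≠ b) :
    ∃ s : G.Walk x b, s.IsPath ∧ 0 < s.length ∧ IsAltWalk M s ∧ StartsMatched M s ∧
      EndsUnmatched M s ∧ (∀ e ∈ s.edges, e ∈ c.edges) ∧ ∀ y ∈ s.support, y ∈ c.support := by
  classical
  obtain ⟨ht, hd⟩ := cycle_take_drop_path hB.1 hx hxb
  set t := c.takeUntil x hx with htdef
  set d := c.dropUntil x hx with hddef
  have hspec : t.append d = c := c.take_spec hx
  have hsplit : t.edges ++ d.edges = c.edges := by rw [← Walk.edges_append, hspec]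
  have hlen : t.length + d.length = c.length := by rw [← Walk.length_append, hspec]
  have htl : t.length ≠ 0 := fun h => hxb (Walk.eq_of_length_eq_zero h).symm
  have hdl : d.length ≠ 0 := fun h => hxb (Walk.eq_of_length_eq_zero h)
  have hel : c.edges.length = c.length := c.length_edges
  have hetl : t.edges.length = t.length := t.length_edges
  have hedl : d.edges.length = d.length := d.length_edges
  have hCodd : c.length % 2 = 1 := Nat.odd_iff.mp hB.2.1
  have htne : t.edges ≠ [] := by
    intro h; apply htl; rw [← hetl, h]; rfl
  have hdne : d.edges ≠ [] := by
    intro h; apply hdl; rw [← hedl, h]; rfl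
  have halt : c.edges.Chain' (fun e f => e ∈ M ↔ f ∉ M) := hB.2.2.1
  by_cases hpar : Odd t.length
  · refine ⟨d, hd, by omega, ?_, ?_, ?_, fun e he => hsplit ▸ List.mem_append_right _ he,
      fun y hy => c.support_dropUntil_subset hx hy⟩
    · exact List.IsChain.suffix halt ⟨t.edges, hsplit⟩
    · refine ⟨c.edges[t.edges.length]'(by omega),
        head?_eq_of_append hsplit hdne (by omega), ?_⟩
      rw [blossom_parity hB (by omega)]
      rwa [hetl]
    · refine ⟨c.edges[c.edges.length - 1]'(by omega),
        getLast?_eq_of_append_right hsplit hdne (by omega), ?_⟩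
      rw [blossom_parity hB (by omega), Nat.odd_iff]
      omega
  · rw [Nat.not_odd_iff_even, Nat.even_iff] at hpar
    refine ⟨t.reverse, ht.reverse, by rw [Walk.length_reverse]; omega,
      IsAltWalk.reverse (List.IsChain.prefix halt ⟨d.edges, hsplit⟩), ?_, ?_, ?_, ?_⟩
    · refine ⟨c.edges[t.edges.length - 1]'(by omega), ?_, ?_⟩
      · rw [Walk.edges_reverse, List.head?_reverse]
        exact getLast?_eq_of_append_left hsplit htne (by omega)
      · rw [blossom_parity hB (by omega), Nat.odd_iff]
        omega
    · refine ⟨c.edges[0]'(by omega), ?_, ?_⟩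
      · rw [Walk.edges_reverse, List.getLast?_reverse]
        exact head?_eq_of_append_left hsplit htne (by omega)
      · rw [blossom_parity hB (by omega), Nat.odd_iff]
        omega
    · intro e he
      rw [Walk.edges_reverse, List.mem_reverse] at he
      exact hsplit ▸ List.mem_append_left _ he
    · intro y hy
      rw [Walk.support_reverse, List.mem_reverse] at hy
      exact c.support_takeUntil_subset hx hy

private lemma blossom_vertex_matched {b : V} {c : G.Walk b b}
    (hB : IsBlossom G M c) {y : V} (hy : y ∈ c.support) (hyb : y ≠ b) :
    ∃ e, e ∈ M ∧ e ∈ c.edges ∧ y ∈ e := by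
  obtain ⟨s, _, _, _, hsS, _, hse, _⟩ := cycle_segment hB hy hyb
  obtain ⟨e, he, heM⟩ := hsS
  exact ⟨e, heM, hse e (List.mem_of_mem_head? (by simp [he])), start_mem_head_edge he⟩

private lemma base_not_mem {b₁ b₂ : V} {c₁ : G.Walk b₁ b₁} {c₂ : G.Walk b₂ b₂}
    {p : G.Walk b₁ b₂} (hMm : IsMatching' G M) (hT : IsTposy G M c₁ c₂ p) :
    b₂ ∉ c₁.support := by
  obtain ⟨⟨hB₁, hB₂, hne', hp, hodd, halt, hsm, hem⟩, hint⟩ := hT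
  have hplen : p.length ≠ 0 := by rw [Nat.odd_iff] at hodd; omega
  have hb12 : b₁ ≠ b₂ := by
    intro h
    have h1 : b₂ ∈ p.support.tail := end_mem_support_tail p hplen
    have h2 := hp.support_nodup
    rw [p.support_eq_cons, List.nodup_cons] at h2
    exact h2.1 (h ▸ h1)
  intro hb
  obtain ⟨e₁, he₁M, he₁c, hbe₁⟩ := blossom_vertex_matched hB₁ hb (Ne.symm hb12)
  obtain ⟨e₂, hl₂, he₂M⟩ := hem
  have he₂p : e₂ ∈ p.edges := by
    rw [← List.head?_reverse] at hl₂
    rw [← List.mem_reverse]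
    exact List.mem_of_mem_head? (by simp [hl₂])
  have hbe₂ : b₂ ∈ e₂ := end_mem_getLast_edge hl₂
  by_cases heq : e₁ = e₂
  · subst heq
    obtain ⟨a, rfl⟩ := (Sym2.mem_iff_exists).mp hbe₁
    have haps : a ∈ p.support := p.snd_mem_support_of_mem_edges he₂p
    have hac : a ∈ c₁.support := c₁.snd_mem_support_of_mem_edges he₁c
    have hab2 : a ≠ b₂ := (p.adj_of_mem_edges he₂p).ne'
    by_cases hab1 : a = b₁
    · subst hab1
      exact (hB₁.2.2.2.2 _ he₁c he₁M) (Sym2.mem_mk_right _ _)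
    · exact (hint a haps hab1 hab2).1 hac
  · exact hMm.2 e₁ he₁M e₂ he₂M heq b₂ ⟨hbe₁, hbe₂⟩

private lemma tposy_half {b₁ b₂ : V} {c₁ : G.Walk b₁ b₁} {c₂ : G.Walk b₂ b₂}
    {p : G.Walk b₁ b₂} (hMm : IsMatching' G M) (hT : IsTposy G M c₁ c₂ p) {x : V}
    (hx : x ∈ c₁.support) :
    ∃ q : G.Walk x b₂, 0 < q.length ∧ q.IsPath ∧ IsAltWalk M q ∧ StartsMatched M q ∧
      EndsMatched M q ∧ ∀ e ∈ q.edges, e ∈ c₁.edges ∨ e ∈ p.edges := by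
  have hb2 := base_not_mem hMm hT
  obtain ⟨⟨hB₁, hB₂, hne', hp, hodd, halt, hsm, hem⟩, hint⟩ := hT
  by_cases hxb : x = b₁
  · subst hxb
    exact ⟨p, by rw [Nat.odd_iff] at hodd; omega, hp, halt, hsm, hem, fun e he => Or.inr he⟩
  · obtain ⟨s, hsP, hsL, hsA, hsS, hsE, hse, hss⟩ := cycle_segment hB₁ hx hxb
    refine ⟨s.append p, ?_, ?_, ?_, ?_, ?_, ?_⟩
    · rw [Walk.length_append]; omega
    · apply isPath_append' hsP hp
      intro y hys hyp
      by_cases h1 : y = b₁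
      · exact h1
      · exfalso
        by_cases h2 : y = b₂
        · exact hb2 (h2 ▸ hss y hys)
        · exact (hint y hyp h1 h2).1 (hss y hys)
    · show ((s.append p).edges).Chain' _
      rw [Walk.edges_append]
      refine List.IsChain.append hsA halt ?_
      intro e he f hf
      obtain ⟨e', hgl, he'M⟩ := hsE
      obtain ⟨f', hh, hf'M⟩ := hsm
      rw [hgl] at he
      rw [hh] at hf
      rw [Option.mem_some_iff] at he hf
      subst he; subst hf
      constructor <;> tauto
    · obtain ⟨e, he, heM⟩ := hsS
      exact ⟨e, by rw [Walk.edges_append]; exact head?_append_left he, heM⟩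
    · obtain ⟨e, he, heM⟩ := hem
      exact ⟨e, by rw [Walk.edges_append]; exact getLast?_append_right' he, heM⟩
    · intro e he
      rw [Walk.edges_append, List.mem_append] at he
      exact he.imp (hse e) id

private lemma tposy_path_case {b₁ b₂ : V} {c₁ : G.Walk b₁ b₁} {c₂ : G.Walk b₂ b₂}
    {p : G.Walk b₁ b₂} (hT : IsTposy G M c₁ c₂ p) {x : V} (hx : x ∈ p.support) :
    ∃ (b' : V) (q : G.Walk x b'), (b' = b₁ ∨ b' = b₂) ∧ 0 < q.length ∧ q.IsPath ∧
      IsAltWalk M q ∧ StartsMatched M q ∧ EndsMatched M q ∧ ∀ e ∈ q.edges, e ∈ p.edges := by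
  obtain ⟨⟨hB₁, hB₂, hne', hp, hodd, halt, hsm, hem⟩, hint⟩ := hT
  set t := p.takeUntil x hx with htdef
  set d := p.dropUntil x hx with hddef
  have hspec : t.append d = p := p.take_spec hx
  have hsplit : t.edges ++ d.edges = p.edges := by rw [← Walk.edges_append, hspec]
  have hlen : t.length + d.length = p.length := by rw [← Walk.length_append, hspec]
  have hel : p.edges.length = p.length := p.length_edges
  have hetl : t.edges.length = t.length := t.length_edges
  have hedl : d.edges.length = d.length := d.length_edges
  have hoddn : p.length % 2 = 1 := Nat.odd_iff.mp hodd
  have haltC : p.edges.Chain' (fun e f => e ∈ M ↔ f ∉ M) := halt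
  by_cases hpar : Odd t.length
  · rw [Nat.odd_iff] at hpar
    have htne : t.edges ≠ [] := by
      intro h
      have := hetl
      rw [h] at this
      simp at this
      omega
    have htP : t.IsPath := hp.takeUntil hx
    refine ⟨b₁, t.reverse, Or.inl rfl, by rw [Walk.length_reverse]; omega, htP.reverse,
      IsAltWalk.reverse (List.IsChain.prefix haltC ⟨d.edges, hsplit⟩), ?_, ?_, ?_⟩
    · refine ⟨p.edges[t.edges.length - 1]'(by omega), ?_, ?_⟩
      · rw [Walk.edges_reverse, List.head?_reverse]
        exact getLast?_eq_of_append_left hsplit htne (by omega)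
      · rw [mm_parity halt hsm (by omega), Nat.even_iff]
        omega
    · refine ⟨p.edges[0]'(by omega), ?_, ?_⟩
      · rw [Walk.edges_reverse, List.getLast?_reverse]
        exact head?_eq_of_append_left hsplit htne (by omega)
      · rw [mm_parity halt hsm (by omega)]
        exact Even.zero
    · intro e he
      rw [Walk.edges_reverse, List.mem_reverse] at he
      exact hsplit ▸ List.mem_append_left _ he
  · rw [Nat.not_odd_iff_even, Nat.even_iff] at hpar
    have hdl : d.length ≠ 0 := by omega
    have hdne : d.edges ≠ [] := by
      intro h
      have := hedl
      rw [h] at this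
      simp at this
      omega
    have hdP : d.IsPath := hp.dropUntil hx
    refine ⟨b₂, d, Or.inr rfl, by omega, hdP,
      List.IsChain.suffix haltC ⟨t.edges, hsplit⟩, ?_, ?_,
      fun e he => hsplit ▸ List.mem_append_right _ he⟩
    · refine ⟨p.edges[t.edges.length]'(by omega), head?_eq_of_append hsplit hdne (by omega), ?_⟩
      rw [mm_parity halt hsm (by omega), Nat.even_iff]
      omega
    · refine ⟨p.edges[p.edges.length - 1]'(by omega),
        getLast?_eq_of_append_right hsplit hdne (by omega), ?_⟩
      rw [mm_parity halt hsm (by omega), Nat.even_iff]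
      omega

end Aux

/-- In an `M`-Tposy `H`, every vertex of `H` is joined inside `H` to the
base of one of the two blossoms by a non-trivial `mm`-alternating path. -/
theorem stmt_11 {V : Type*} [DecidableEq V] (G : SimpleGraph V) (M : Finset (Sym2 V))
    (hM : IsMaxMatching G M) {b₁ b₂ : V}
    (c₁ : G.Walk b₁ b₁) (c₂ : G.Walk b₂ b₂) (p : G.Walk b₁ b₂)
    (hT : IsTposy G M c₁ c₂ p) (x : V)
    (hx : x ∈ c₁.support ∨ x ∈ c₂.support ∨ x ∈ p.support) :
    ∃ (b' : V) (q : G.Walk x b'), (b' = b₁ ∨ b' = b₂) ∧ 0 < q.length ∧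
      q.IsPath ∧ IsAltWalk M q ∧ StartsMatched M q ∧ EndsMatched M q ∧
      ∀ e ∈ q.edges, e ∈ c₁.edges ∨ e ∈ c₂.edges ∨ e ∈ p.edges := by
  have hMm := hM.1
  rcases hx with hx | hx | hx
  · obtain ⟨q, h1, h2, h3, h4, h5, h6⟩ := tposy_half hMm hT hx
    exact ⟨b₂, q, Or.inr rfl, h1, h2, h3, h4, h5,
      fun e he => (h6 e he).elim Or.inl (fun h => Or.inr (Or.inr h))⟩
  · have hT' : IsTposy G M c₂ c₁ p.reverse := by
      obtain ⟨⟨hB₁, hB₂, hne', hp, hodd, halt, hsm, hem⟩, hint⟩ := hT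
      refine ⟨⟨hB₂, hB₁, ?_, hp.reverse, by rwa [Walk.length_reverse],
        IsAltWalk.reverse halt, ?_, ?_⟩, ?_⟩
      · rcases hne' with h | h
        · exact Or.inl (Ne.symm h)
        · exact Or.inr (Ne.symm h)
      · obtain ⟨e, he, heM⟩ := hem
        exact ⟨e, by rw [Walk.edges_reverse, List.head?_reverse]; exact he, heM⟩
      · obtain ⟨e, he, heM⟩ := hsm
        exact ⟨e, by rw [Walk.edges_reverse, List.getLast?_reverse]; exact he, heM⟩
      · intro y hy h2 h1
        rw [Walk.support_reverse, List.mem_reverse] at hy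
        exact ⟨(hint y hy h1 h2).2, (hint y hy h1 h2).1⟩
    obtain ⟨q, h1, h2, h3, h4, h5, h6⟩ := tposy_half hMm hT' hx
    refine ⟨b₁, q, Or.inl rfl, h1, h2, h3, h4, h5, fun e he => ?_⟩
    rcases h6 e he with h | h
    · exact Or.inr (Or.inl h)
    · rw [Walk.edges_reverse, List.mem_reverse] at h
      exact Or.inr (Or.inr h)
  · obtain ⟨b', q, h0, h1, h2, h3, h4, h5, h6⟩ := tposy_path_case hT hx
    exact ⟨b', q, h0, h1, h2, h3, h4, h5, fun e he => Or.inr (Or.inr (h6 e he))⟩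
end
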